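/- arXiv:1905.10015 — 4 statements merged into one kernel-verified Lean document; each statement's English description precedes it below -/
import Mathlib

section
/- Let G be a countable amenable group, let X ⊂ Σ^G be a G-SFT and let Y ⊂ X be a G-subshift contained in X. Then for every ε > 0 there exists a G-SFT Z with Y ⊆ Z ⊆ X such that h_top(G ↷ Y) ≤ h_top(G ↷ Z) ≤ h_top(G ↷ Y) + ε. -/
open Filter Topology

/-! ### Symbolic dynamics over a countable group -/

/-- The left shift action of `G` on the full shift `G → A`: `(shiftMul g x) h = x (h * g)`. -/
def shiftMul {G A : Type*} [Group G] (g : G) (x : G → A) : G → A :=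
  fun h => x (h * g)

/-- A pattern: a coloring of a finite subset (its support) of the group. -/
structure Pattern (G A : Type*) where
  supp : Finset G
  val : {g // g ∈ supp} → A

/-- A pattern appears (somewhere) in a configuration `x`. -/
def Pattern.appearsIn {G A : Type*} [Group G] (p : Pattern G A) (x : G → A) : Prop :=
  ∃ g : G, ∀ h : {g // g ∈ p.supp}, x ((h : G) * g) = p.val h

/-- The set of configurations in which no pattern from `𝓕` appears. -/
def avoidSet {G A : Type*} [Group G] (𝓕 : Set (Pattern G A)) : Set (G → A) :=
  { x | ∀ p ∈ 𝓕, ¬ p.appearsIn x }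

/-- A subshift: a closed, shift-invariant subset of the full shift
(the alphabet carrying the discrete topology, `G → A` the product topology). -/
def IsSubshift {G A : Type*} [Group G] (X : Set (G → A)) : Prop :=
  (letI : TopologicalSpace A := ⊥; IsClosed X) ∧ ∀ g : G, ∀ x ∈ X, shiftMul g x ∈ X

/-- A subshift of finite type: defined by a finite set of forbidden patterns. -/
def IsSFT {G A : Type*} [Group G] (X : Set (G → A)) : Prop :=
  ∃ 𝓕 : Set (Pattern G A), 𝓕.Finite ∧ X = avoidSet 𝓕

/-- The language of `X` with support `F`: patterns on `F` appearing in a configuration of `X`. -/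
def lang {G A : Type*} [Group G] (X : Set (G → A)) (F : Finset G) :
    Set ({g // g ∈ F} → A) :=
  { p | ∃ x ∈ X, ∀ h : {g // g ∈ F}, x (h : G) = p h }

/-- Topological entropy of a subshift over a countable amenable group, via the infimum
formula `h_top(G ↷ X) = inf_F (1/|F|) log |L_F(X)|` over nonempty finite `F ⊆ G`. -/
noncomputable def subshiftEntropy {G A : Type*} [Group G] (X : Set (G → A)) : ℝ :=
  ⨅ F : {F : Finset G // F.Nonempty},
    Real.log (((lang X (F : Finset G)).ncard : ℝ)) / (((F : Finset G).card : ℝ))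

/-- A (left) Følner sequence for `G`. -/
def IsFolnerSeq {G : Type*} [Group G] (F : ℕ → Finset G) : Prop :=
  (∀ n, (F n).Nonempty) ∧
  ∀ g : G,
    Tendsto (fun n => ((((g * ·) '' (F n : Set G)) \ (F n : Set G)).ncard : ℝ) / ((F n).card : ℝ))
      atTop (𝓝 0)

/-- Amenability of a countable group: the existence of a Følner sequence. -/
def IsAmenable (G : Type*) [Group G] : Prop :=
  ∃ F : ℕ → Finset G, IsFolnerSeq F

/-- `entropiesSFT G` is the set of real numbers attained as topological entropies of
(non-empty) `G`-subshifts of finite type. -/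
def entropiesSFT (G : Type*) [Group G] : Set ℝ :=
  { r | ∃ (A : Type) (_ : Fintype A) (X : Set (G → A)),
      IsSFT X ∧ X.Nonempty ∧ subshiftEntropy X = r }

/-! ### Cocycles, charts and embeddings -/

/-- An `H`-cocycle on `X ⊆ G → A`: a continuous map `γ : H × X → G` (each alphabet and `G`
discrete) satisfying `γ(h₁h₂, x) = γ(h₁, γ(h₂,x)·x) * γ(h₂,x)` on `X`. -/
def IsCocycle {G H A : Type*} [Group G] [Group H] (X : Set (G → A))
    (γ : H → (G → A) → G) : Prop :=
  (∀ h : H,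
    letI : TopologicalSpace A := ⊥
    letI : TopologicalSpace G := ⊥
    ContinuousOn (γ h) X) ∧
  ∀ h₁ h₂ : H, ∀ x ∈ X, γ (h₁ * h₂) x = γ h₁ (shiftMul (γ h₂ x) x) * γ h₂ x

/-- The left action `H ↷^x G` induced by a cocycle: `h ·ₓ g = γ(h, g·x) * g`. -/
def chartSMul {G H A : Type*} [Group G] [Group H] (γ : H → (G → A) → G)
    (x : G → A) (h : H) (g : G) : G :=
  γ h (shiftMul g x) * g

/-- A `G`-chart of `H`: a `G`-subshift `X` together with an `H`-cocycle on it. -/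
def IsChart {G H A : Type*} [Group G] [Group H] (X : Set (G → A))
    (γ : H → (G → A) → G) : Prop :=
  IsSubshift X ∧ IsCocycle X γ

/-- A free `G`-chart of `H`: the induced action `H ↷^x G` is free for every `x ∈ X`. -/
def IsFreeChart {G H A : Type*} [Group G] [Group H] (X : Set (G → A))
    (γ : H → (G → A) → G) : Prop :=
  IsChart X γ ∧ ∀ x ∈ X, ∀ h : H, ∀ g : G, chartSMul γ x h g = g → h = 1

/-- The `(X,γ)`-embedding `Y_γ[X]` of an `H`-subshift `Y`: all configurations
`z : G → B × A` whose second component lies in `X` and such that for every `g ∈ G` the induced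
configuration `h ↦ z(γ(h, g·x) g).1` lies in `Y` (where `x` is the second component of `z`). -/
def chartEmbed {G H A B : Type*} [Group G] [Group H]
    (γ : H → (G → A) → G) (X : Set (G → A)) (Y : Set (H → B)) : Set (G → B × A) :=
  { z | (fun g => (z g).2) ∈ X ∧
      ∀ g : G, (fun h : H => (z (chartSMul γ (fun g' => (z g').2) h g)).1) ∈ Y }

/-! ### Translation-like actions -/

/-- A translation-like action of `H` on a (finitely generated) group `G`:
a free action of `H` on the set `G` which moves points a bounded distance away,
i.e. `{ (h • g) g⁻¹ | g ∈ G }` is finite for every `h ∈ H`. -/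
def HasTranslationLikeAction (H G : Type*) [Group H] [Group G] : Prop :=
  ∃ α : H → G → G,
    (∀ g, α 1 g = g) ∧
    (∀ h₁ h₂ g, α (h₁ * h₂) g = α h₁ (α h₂ g)) ∧
    (∀ h g, α h g = g → h = 1) ∧
    ∀ h : H, (Set.range fun g => α h g * g⁻¹).Finite

/-! ### Computability notions -/

/-- A real number is upper semi-computable if some Turing machine outputs on input `n`
a rational `q_n ≥ r` with `q_n → r`. -/
def UpperSemiComputable (r : ℝ) : Prop :=
  ∃ f : ℕ → ℚ, Computable f ∧ (∀ n, r ≤ (f n : ℝ)) ∧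
    Tendsto (fun n => ((f n : ℚ) : ℝ)) atTop (𝓝 r)

/-- Evaluation of a word over a finite generating tuple (a letter is an index and a sign). -/
def evalWord {G : Type*} [Group G] {n : ℕ} (f : Fin n → G) (w : List (Fin n × Bool)) : G :=
  (w.map fun p => if p.2 then f p.1 else (f p.1)⁻¹).prod

/-- Evaluation of a word over a countable generating family. -/
def wordEval {G : Type*} [Group G] (f : ℕ → G) (w : List (ℕ × Bool)) : G :=
  (w.map fun p => if p.2 then f p.1 else (f p.1)⁻¹).prod

/-- A finitely generated group has decidable word problem if for some finite generating
tuple the set of words representing the identity is decidable. -/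
def HasDecidableWordProblem (G : Type*) [Group G] : Prop :=
  ∃ (n : ℕ) (f : Fin n → G), Subgroup.closure (Set.range f) = ⊤ ∧
    ComputablePred fun w : List (Fin n × Bool) => evalWord f w = 1

/-- A countable group admits a presentation `⟨ℕ ∣ R⟩` with decidable word problem. -/
def HasDecidableWordProblemCountable (G : Type*) [Group G] : Prop :=
  ∃ f : ℕ → G, Subgroup.closure (Set.range f) = ⊤ ∧
    ComputablePred fun w : List (ℕ × Bool) => wordEval f w = 1

/-- A group is finitely presented. -/
def IsFinitelyPresented (H : Type*) [Group H] : Prop :=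
  ∃ (n : ℕ) (rels : Set (FreeGroup (Fin n))), rels.Finite ∧
    Nonempty (PresentedGroup rels ≃* H)

/-- A pattern coding over a generating tuple of size `n`: a finite list of (word, symbol) pairs. -/
abbrev PatternCoding (n : ℕ) (A : Type*) := List (List (Fin n × Bool) × A)

/-- The pattern coded by `c` appears (somewhere) in the configuration `x`. -/
def codingAppears {G A : Type*} [Group G] {n : ℕ} (f : Fin n → G)
    (c : PatternCoding n A) (x : G → A) : Prop :=
  ∃ g : G, ∀ wa ∈ c, x (evalWord f wa.1 * g) = wa.2

/-- A `G`-subshift is effectively closed (w.r.t. a generating tuple `f`) if it is defined by a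
recursively enumerable set of forbidden pattern codings. -/
def EffectivelyClosed {G : Type*} [Group G] {A : Type} [Primcodable A] {n : ℕ}
    (f : Fin n → G) (X : Set (G → A)) : Prop :=
  ∃ e : ℕ → Option (PatternCoding n A), Computable e ∧
    X = { x | ∀ (k : ℕ) (c : PatternCoding n A), e k = some c → ¬ codingAppears f c x }

/-! ### Tilings -/

/-- The tile placed at `g` by the tiling `τ`, i.e. the set `τ(g)g` (empty if `τ(g) = ∅`). -/
def tileAt {G : Type*} [Group G] (T : Finset (Finset G))
    (τ : G → Option {S : Finset G // S ∈ T}) (g : G) : Set G :=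
  { a | ∃ S : {S : Finset G // S ∈ T}, τ g = some S ∧ ∃ t ∈ (S : Finset G), a = t * g }

/-- A tiling of `G` by the tile set `T`: the sets `τ(g)g` are pairwise disjoint and cover `G`. -/
def IsTilingBy {G : Type*} [Group G] (T : Finset (Finset G))
    (τ : G → Option {S : Finset G // S ∈ T}) : Prop :=
  (∀ g₁ g₂ : G, g₁ ≠ g₂ → Disjoint (tileAt T τ g₁) (tileAt T τ g₂)) ∧
  ∀ a : G, ∃ g : G, a ∈ tileAt T τ g

/-! ### Locally admissible patterns -/

/-- A pattern appears within a finite pattern `q` with support `K`. -/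
def Pattern.appearsInFinitePat {G A : Type*} [Group G] (p : Pattern G A)
    (K : Finset G) (q : {g // g ∈ K} → A) : Prop :=
  ∃ g : G, ∀ h : {g // g ∈ p.supp}, ∃ hk : (h : G) * g ∈ K, q ⟨(h : G) * g, hk⟩ = p.val h

/-- Locally admissible patterns with support `K` (w.r.t. the forbidden set `𝓕`). -/
def locallyAdmissible {G A : Type*} [Group G] (𝓕 : Set (Pattern G A)) (K : Finset G) :
    Set ({g // g ∈ K} → A) :=
  { q | ∀ p ∈ 𝓕, ¬ p.appearsInFinitePat K q }

/-! ### Free extensions -/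

/-- The free `G`-extension of an `H`-subshift `X`, for `H ≤ G`: all `y : G → A` such that
every map `h ↦ y(h g)` (restriction to a right `H`-coset) belongs to `X`. -/
def freeExtension {G A : Type*} [Group G] (H : Subgroup G) (X : Set (↥H → A)) :
    Set (G → A) :=
  { y | ∀ g : G, (fun h : ↥H => y ((h : G) * g)) ∈ X }

/-! ### Polycyclic groups and Perron numbers -/

/-- The quotient `A/B` (for `B ≤ A ≤ K`) is a cyclic group: `B.subgroupOf A` is normal in `A`
and there is `x ∈ A` such that every element of `A` is `xⁿ` modulo `B`. -/
def IsCyclicQuot {K : Type*} [Group K] (A B : Subgroup K) : Prop :=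
  (B.subgroupOf A).Normal ∧
    ∃ x : ↥A, ∀ y : ↥A, ∃ n : ℤ, y * (x ^ n)⁻¹ ∈ B.subgroupOf A

/-- A polycyclic series: a finite descending subnormal series from `⊤` to `⊥` with
cyclic quotients. -/
def IsPolycyclicSeries {K : Type*} [Group K] {n : ℕ} (N : Fin (n + 1) → Subgroup K) : Prop :=
  N 0 = ⊤ ∧ N (Fin.last n) = ⊥ ∧
    ∀ i : Fin n, N i.succ ≤ N i.castSucc ∧ IsCyclicQuot (N i.castSucc) (N i.succ)

/-- `G` is virtually polycyclic with Hirsch index `h`: it has a finite-index polycyclic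
subgroup, with a polycyclic series having exactly `h` infinite cyclic quotients. -/
def IsVirtuallyPolycyclicOfHirsch (G : Type*) [Group G] (h : ℕ) : Prop :=
  ∃ K : Subgroup G, K.FiniteIndex ∧
    ∃ (n : ℕ) (N : Fin (n + 1) → Subgroup ↥K), IsPolycyclicSeries N ∧
      Nat.card {i : Fin n // ((N i.succ).subgroupOf (N i.castSucc)).index = 0} = h

/-- A Perron number: a real algebraic integer `> 1` strictly larger in modulus than all of its
algebraic conjugates. -/
def IsPerronNumber (lam : ℝ) : Prop :=
  1 < lam ∧ ∃ p : Polynomial ℤ, p.Monic ∧ Polynomial.aeval lam p = 0 ∧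
    ∀ z : ℂ, Polynomial.aeval z p = 0 → z ≠ (lam : ℂ) → ‖z‖ < lam

section Aux

variable {G A : Type*} [Group G]

lemma lang_nonempty_aux {X : Set (G → A)} (hX : X.Nonempty) (F : Finset G) :
    (lang X F).Nonempty := by
  obtain ⟨x, hx⟩ := hX
  exact ⟨fun h => x h, x, hx, fun h => rfl⟩

lemma lang_mono_aux {X Z : Set (G → A)} (h : X ⊆ Z) (F : Finset G) :
    lang X F ⊆ lang Z F := by
  rintro p ⟨x, hx, he⟩
  exact ⟨x, h hx, he⟩

lemma log_ncard_nonneg_aux [Fintype A] {X : Set (G → A)} (hX : X.Nonempty) (F : Finset G) :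
    0 ≤ Real.log ((lang X F).ncard : ℝ) := by
  have h1 : 1 ≤ (lang X F).ncard := by
    have := (Set.ncard_pos (Set.toFinite _)).mpr (lang_nonempty_aux hX F)
    omega
  exact Real.log_nonneg (by exact_mod_cast h1)

lemma log_ncard_mono_aux [Fintype A] {F : Finset G} {s t : Set ({g // g ∈ F} → A)}
    (hst : s ⊆ t) :
    Real.log (s.ncard : ℝ) ≤ Real.log (t.ncard : ℝ) := by
  rcases s.eq_empty_or_nonempty with rfl | hs
  · rcases Nat.eq_zero_or_pos t.ncard with h | h
    · simp [h]
    · simp only [Set.ncard_empty, Nat.cast_zero, Real.log_zero]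
      exact Real.log_nonneg (by exact_mod_cast h)
  · have h1 : 0 < s.ncard := (Set.ncard_pos (Set.toFinite _)).mpr hs
    have h2 : s.ncard ≤ t.ncard := Set.ncard_le_ncard hst (Set.toFinite _)
    exact Real.log_le_log (by exact_mod_cast h1) (by exact_mod_cast h2)

lemma term_mono_aux [Fintype A] {X Z : Set (G → A)} {F : Finset G}
    (h : lang X F ⊆ lang Z F) :
    Real.log ((lang X F).ncard : ℝ) / (F.card : ℝ) ≤
      Real.log ((lang Z F).ncard : ℝ) / (F.card : ℝ) := by
  rcases Nat.eq_zero_or_pos F.card with hc | hc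
  · simp [hc]
  · exact (div_le_div_iff_of_pos_right (by exact_mod_cast hc)).mpr (log_ncard_mono_aux h)

end Aux

/-- If `X` is a `G`-SFT over a countable amenable group and `Y ⊆ X` is a subshift, then for
every `ε > 0` there is a `G`-SFT `Z` with `Y ⊆ Z ⊆ X` and
`h_top(G ↷ Y) ≤ h_top(G ↷ Z) ≤ h_top(G ↷ Y) + ε`. -/
theorem SFT_entropy_approximation {G : Type*} {A : Type*} [Group G] [Countable G] [Fintype A]
    (hG : IsAmenable G) (X Y : Set (G → A))
    (hX : IsSFT X) (hY : IsSubshift Y) (hYX : Y ⊆ X)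
    (ε : ℝ) (hε : 0 < ε) :
    ∃ Z : Set (G → A), IsSFT Z ∧ Y ⊆ Z ∧ Z ⊆ X ∧
      subshiftEntropy Y ≤ subshiftEntropy Z ∧
      subshiftEntropy Z ≤ subshiftEntropy Y + ε := by
  rcases Y.eq_empty_or_nonempty with hYe | hYne
  · -- `Y` is empty: take `Z = ∅`, an SFT (forbid the empty pattern).
    refine ⟨∅, ?_, by simp [hYe], by simp, by simp [hYe], by simp [hYe]; linarith⟩
    refine ⟨{⟨∅, fun h => (Finset.notMem_empty _ h.2).elim⟩}, Set.finite_singleton _, ?_⟩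
    ext x
    simp only [Set.mem_empty_iff_false, avoidSet, Set.mem_setOf_eq, Set.mem_singleton_iff,
      false_iff, not_forall]
    exact ⟨_, rfl, not_not_intro ⟨1, fun h => (Finset.notMem_empty _ h.2).elim⟩⟩
  · haveI : Nonempty {F : Finset G // F.Nonempty} := ⟨⟨{1}, Finset.singleton_nonempty 1⟩⟩
    obtain ⟨𝓕, h𝓕fin, hXeq⟩ := hX
    -- choose a window `F` whose normalized log-language-size is within `ε` of the entropy of `Y`
    have hlt : subshiftEntropy Y < subshiftEntropy Y + ε := by linarith
    obtain ⟨F, hF⟩ := exists_lt_of_ciInf_lt hlt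
    -- forbid, additionally, all patterns on `F` that do not occur in `Y`
    set 𝓕₂ : Set (Pattern G A) :=
      (fun v => Pattern.mk (F : Finset G) v) '' (lang Y (F : Finset G))ᶜ with h𝓕₂
    set Z : Set (G → A) := avoidSet (𝓕 ∪ 𝓕₂) with hZ
    have hYZ : Y ⊆ Z := by
      intro y hy p hp
      rcases hp with hp | hp
      · have := hYX hy
        rw [hXeq] at this
        exact this p hp
      · obtain ⟨v, hv, rfl⟩ := hp
        rintro ⟨g, hg⟩
        exact hv ⟨shiftMul g y, hY.2 g y hy, fun h => hg h⟩
    have hZX : Z ⊆ X := by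
      intro z hz
      rw [hXeq]
      exact fun p hp => hz p (Or.inl hp)
    have hZne : Z.Nonempty := hYne.mono hYZ
    have hlangZY : lang Z (F : Finset G) ⊆ lang Y (F : Finset G) := by
      rintro p ⟨z, hz, he⟩
      by_contra hp
      refine hz (Pattern.mk (F : Finset G) p) (Or.inr ⟨p, hp, rfl⟩) ⟨1, fun h => ?_⟩
      rw [mul_one]
      exact he h
    have hbY : BddBelow (Set.range fun F : {F : Finset G // F.Nonempty} =>
        Real.log (((lang Y (F : Finset G)).ncard : ℝ)) / (((F : Finset G).card : ℝ))) := by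
      refine ⟨0, ?_⟩
      rintro r ⟨F', rfl⟩
      exact div_nonneg (log_ncard_nonneg_aux hYne _) (Nat.cast_nonneg _)
    have hbZ : BddBelow (Set.range fun F : {F : Finset G // F.Nonempty} =>
        Real.log (((lang Z (F : Finset G)).ncard : ℝ)) / (((F : Finset G).card : ℝ))) := by
      refine ⟨0, ?_⟩
      rintro r ⟨F', rfl⟩
      exact div_nonneg (log_ncard_nonneg_aux hZne _) (Nat.cast_nonneg _)
    refine ⟨Z, ⟨𝓕 ∪ 𝓕₂, h𝓕fin.union ((Set.toFinite _).image _), rfl⟩, hYZ, hZX, ?_, ?_⟩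
    · exact ciInf_mono hbY fun F' => term_mono_aux (lang_mono_aux hYZ _)
    · calc subshiftEntropy Z ≤
          Real.log (((lang Z (F : Finset G)).ncard : ℝ)) / (((F : Finset G).card : ℝ)) :=
            ciInf_le hbZ F
        _ ≤ Real.log (((lang Y (F : Finset G)).ncard : ℝ)) / (((F : Finset G).card : ℝ)) :=
            term_mono_aux hlangZY
        _ ≤ subshiftEntropy Y + ε := le_of_lt hF
end

section
/- Let H and G be finitely generated groups such that (1) H admits a translation-like action on G, (2) H is finitely presented, and (3) there exists a non-empty H-SFT on which the H-shift action is free. Then there exists a free G-chart (X, γ) of H such that X is a non-empty G-SFT. -/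
open Filter Topology

theorem shiftMul_shiftMul {G A : Type*} [Group G] (a b : G) (x : G → A) :
    shiftMul a (shiftMul b x) = shiftMul (a * b) x :=
  funext fun h => by simp [shiftMul, mul_assoc]

theorem shiftMul_one' {G A : Type*} [Group G] (x : G → A) : shiftMul (1 : G) x = x :=
  funext fun h => by simp [shiftMul]

theorem avoidSet_isSubshift {G A : Type*} [Group G] (𝓕 : Set (Pattern G A)) :
    IsSubshift (avoidSet 𝓕) := by
  constructor
  · letI : TopologicalSpace A := ⊥
    haveI : DiscreteTopology A := ⟨rfl⟩
    rw [← isOpen_compl_iff]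
    have hc : (avoidSet 𝓕)ᶜ =
        ⋃ p ∈ 𝓕, ⋃ g : G,
          {x : G → A | ∀ h : {a // a ∈ p.supp}, x ((h : G) * g) = p.val h} := by
      ext x
      simp [avoidSet, Pattern.appearsIn]
    rw [hc]
    refine isOpen_biUnion fun p _ => isOpen_iUnion fun g => ?_
    have he : {x : G → A | ∀ h : {a // a ∈ p.supp}, x ((h : G) * g) = p.val h} =
        ⋂ h : {a // a ∈ p.supp}, (fun x : G → A => x ((h : G) * g)) ⁻¹' {p.val h} := by
      ext x; simp
    rw [he]
    exact isOpen_iInter_of_finite fun h =>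
      (continuous_apply _).isOpen_preimage _ (isOpen_discrete _)
  · rintro g x hx p hp ⟨g', hg'⟩
    exact hx p hp ⟨g' * g, fun h => by
      simpa [shiftMul, mul_assoc] using hg' h⟩

theorem avoidSet_iUnion {G A : Type*} [Group G] {ι : Sort*} (f : ι → Set (Pattern G A)) :
    avoidSet (⋃ i, f i) = ⋂ i, avoidSet (f i) := by
  ext x; simp [avoidSet]; tauto

open Pointwise in
structure ChartSetup (G H : Type*) [Group G] [Group H] where
  n : ℕ
  rels : Set (FreeGroup (Fin n))
  relsFin : rels.Finite
  φ : PresentedGroup rels ≃* H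
  α : H → G → G
  α_one : ∀ g, α 1 g = g
  α_mul : ∀ h₁ h₂ g, α (h₁ * h₂) g = α h₁ (α h₂ g)
  α_free : ∀ h g, α h g = g → h = 1
  α_fin : ∀ h : H, (Set.range fun g => α h g * g⁻¹).Finite
  B : Type
  instB : Fintype B
  FZ : Set (Pattern H B)
  FZfin : FZ.Finite
  z0 : H → B
  z0mem : z0 ∈ avoidSet FZ
  Zfree : ∀ z ∈ avoidSet FZ, ∀ h : H, shiftMul h z = z → h = 1

namespace ChartSetup

open Pointwise
open scoped Classical

variable {G H : Type*} [Group G] [Group H] (S : ChartSetup G H)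

instance : Fintype S.B := S.instB

/-- images of the generators in `H` -/
noncomputable def gens (i : Fin S.n) : H := S.φ (PresentedGroup.of i)

def D0set : Set G :=
  {1} ∪ ⋃ i : Fin S.n,
    ((Set.range fun g => S.α (S.gens i) g * g⁻¹) ∪
     (Set.range fun g => S.α (S.gens i)⁻¹ g * g⁻¹))

lemma D0set_finite : S.D0set.Finite := by
  refine (Set.finite_singleton 1).union (Set.finite_iUnion fun i => ?_)
  exact (S.α_fin _).union (S.α_fin _)

/-- the finite displacement set -/
noncomputable def D0 : Finset G := S.D0set_finite.toFinset

lemma one_mem_D0 : (1 : G) ∈ S.D0 := by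
  simp [D0, D0set]

lemma mem_D0_left (i : Fin S.n) (g : G) : S.α (S.gens i) g * g⁻¹ ∈ S.D0 := by
  simp only [D0, Set.Finite.mem_toFinset, D0set]
  exact Or.inr (Set.mem_iUnion.2 ⟨i, Or.inl ⟨g, rfl⟩⟩)

lemma mem_D0_right (i : Fin S.n) (g : G) : S.α (S.gens i)⁻¹ g * g⁻¹ ∈ S.D0 := by
  simp only [D0, Set.Finite.mem_toFinset, D0set]
  exact Or.inr (Set.mem_iUnion.2 ⟨i, Or.inr ⟨g, rfl⟩⟩)

/-- the alphabet -/
def A : Type := (Fin S.n → Fin S.D0.card × Fin S.D0.card) × S.B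

noncomputable instance : Fintype S.A :=
  inferInstanceAs (Fintype ((Fin S.n → Fin S.D0.card × Fin S.D0.card) × S.B))

noncomputable def encD (g : G) (hg : g ∈ S.D0) : Fin S.D0.card := S.D0.equivFin ⟨g, hg⟩

noncomputable def dec (j : Fin S.D0.card) : G := (S.D0.equivFin.symm j : G)

lemma dec_mem (j : Fin S.D0.card) : S.dec j ∈ S.D0 := (S.D0.equivFin.symm j).2

lemma dec_encD (g : G) (hg : g ∈ S.D0) : S.dec (S.encD g hg) = g := by
  simp [dec, encD]

instance : Nonempty S.A :=
  ⟨⟨fun _ => (S.encD 1 S.one_mem_D0, S.encD 1 S.one_mem_D0), S.z0 1⟩⟩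

/-- the local displacement read off from a configuration -/
noncomputable def dloc (x : G → S.A) (i : Fin S.n) (b : Bool) : G :=
  S.dec (if b then ((x 1).1 i).1 else ((x 1).1 i).2)

lemma dloc_mem (x : G → S.A) (i : Fin S.n) (b : Bool) : S.dloc x i b ∈ S.D0 :=
  S.dec_mem _

/-- the cocycle evaluated on words -/
noncomputable def cw : List (Fin S.n × Bool) → (G → S.A) → G
  | [], _ => 1
  | l :: w, x => S.dloc (shiftMul (cw w x) x) l.1 l.2 * cw w x

lemma cw_mem (w : List (Fin S.n × Bool)) (x : G → S.A) :
    S.cw w x ∈ S.D0 ^ w.length := by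
  induction w with
  | nil => simp [cw]
  | cons l w ih =>
      rw [List.length_cons, pow_succ']
      exact Finset.mul_mem_mul (S.dloc_mem _ _ _) ih

lemma cw_local (w : List (Fin S.n × Bool)) (x y : G → S.A)
    (hxy : ∀ a ∈ S.D0 ^ w.length, x a = y a) : S.cw w x = S.cw w y := by
  induction w with
  | nil => rfl
  | cons l w ih =>
      have hsub : S.D0 ^ w.length ⊆ S.D0 ^ (l :: w).length :=
        Finset.pow_subset_pow_right S.one_mem_D0 (Nat.le_succ _)
      have h0 : S.cw w x = S.cw w y := ih fun a ha => hxy a (hsub ha)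
      have hmem : S.cw w y ∈ S.D0 ^ (l :: w).length := hsub (S.cw_mem w y)
      simp only [cw]
      rw [h0]
      have : shiftMul (S.cw w y) x 1 = shiftMul (S.cw w y) y 1 := by
        show x (1 * S.cw w y) = y (1 * S.cw w y)
        rw [one_mul]
        exact hxy _ hmem
      unfold dloc
      rw [this]

lemma cw_append (w₁ w₂ : List (Fin S.n × Bool)) (x : G → S.A) :
    S.cw (w₁ ++ w₂) x = S.cw w₁ (shiftMul (S.cw w₂ x) x) * S.cw w₂ x := by
  induction w₁ with
  | nil => simp [cw]
  | cons l w ih =>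
      rw [List.cons_append]
      simp only [cw]
      rw [ih, shiftMul_shiftMul, mul_assoc]

end ChartSetup

namespace ChartSetup

open Pointwise
open scoped Classical

variable {G H : Type*} [Group G] [Group H] (S : ChartSetup G H)

/-- restriction of a configuration to a finite window -/
def restr (F : Finset G) (x : G → S.A) : {g // g ∈ F} → S.A := fun h => x h

/-- extension of a finite pattern to a configuration -/
noncomputable def ext' (F : Finset G) (v : {g // g ∈ F} → S.A) : G → S.A :=
  fun g => if h : g ∈ F then v ⟨g, h⟩ else Classical.arbitrary S.A

lemma restr_ext' (F : Finset G) (x : G → S.A) (a : G) (ha : a ∈ F) :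
    S.ext' F (S.restr F x) a = x a := by
  simp [ext', restr, ha]

/-- the forbidden patterns enforcing a local condition `P` with window `F` -/
noncomputable def pats (F : Finset G) (P : (G → S.A) → Prop) : Set (Pattern G S.A) :=
  (fun v => Pattern.mk F v) '' {v | ¬ P (S.ext' F v)}

lemma pats_finite (F : Finset G) (P : (G → S.A) → Prop) : (S.pats F P).Finite :=
  Set.Finite.image _ (Set.toFinite _)

/-- `P` only depends on the window `F` -/
def IsLocal (F : Finset G) (P : (G → S.A) → Prop) : Prop :=
  ∀ x y : G → S.A, (∀ a ∈ F, x a = y a) → (P x ↔ P y)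

lemma appearsIn_pats_iff (F : Finset G) (v : {g // g ∈ F} → S.A) (x : G → S.A) :
    (Pattern.mk F v).appearsIn x ↔ ∃ g : G, S.restr F (shiftMul g x) = v := by
  constructor
  · rintro ⟨g, hg⟩
    exact ⟨g, funext fun h => hg h⟩
  · rintro ⟨g, hg⟩
    exact ⟨g, fun h => congrFun hg h⟩

lemma mem_avoid_pats_iff (F : Finset G) (P : (G → S.A) → Prop) (hP : S.IsLocal F P)
    (x : G → S.A) : x ∈ avoidSet (S.pats F P) ↔ ∀ g : G, P (shiftMul g x) := by
  constructor
  · intro hx g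
    by_contra hn
    have hnn : ¬ P (S.ext' F (S.restr F (shiftMul g x))) := by
      intro hcon
      exact hn ((hP _ _ fun a ha => S.restr_ext' F (shiftMul g x) a ha).mp hcon)
    exact hx _ ⟨_, hnn, rfl⟩ ((S.appearsIn_pats_iff F _ _).2 ⟨g, rfl⟩)
  · rintro hx p ⟨v, hv, rfl⟩ happ
    obtain ⟨g, hg⟩ := (S.appearsIn_pats_iff F v x).1 happ
    apply hv
    rw [← hg]
    exact (hP _ _ fun a ha => S.restr_ext' F (shiftMul g x) a ha).mpr (hx g)

/-- word representing a group element of `H` -/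
noncomputable def repF (h : H) : FreeGroup (Fin S.n) :=
  (PresentedGroup.mk_surjective S.rels (S.φ.symm h)).choose

lemma repF_spec (h : H) : PresentedGroup.mk S.rels (S.repF h) = S.φ.symm h :=
  (PresentedGroup.mk_surjective S.rels (S.φ.symm h)).choose_spec

noncomputable def wordOf (h : H) : List (Fin S.n × Bool) := (S.repF h).toWord

/-- the index type for the constraints -/
def C : Type _ := (Fin S.n × Bool) ⊕ (↥S.rels ⊕ ↥S.FZ)

/-- windows of the constraints -/
noncomputable def Fc : S.C → Finset G
  | .inl _ => S.D0 ^ 2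
  | .inr (.inl r) => S.D0 ^ (FreeGroup.toWord r.1).length
  | .inr (.inr p) => S.D0 ^ (p.1.supp.sup fun h => (S.wordOf h).length)

/-- the constraints -/
noncomputable def Pc : S.C → (G → S.A) → Prop
  | .inl ib => fun x => S.cw [(ib.1, !ib.2), (ib.1, ib.2)] x = 1
  | .inr (.inl r) => fun x => S.cw (FreeGroup.toWord r.1) x = 1
  | .inr (.inr p) => fun x =>
      ¬ ∀ h : {a // a ∈ p.1.supp}, (x (S.cw (S.wordOf h.1) x)).2 = p.1.val h

lemma Pc_local (c : S.C) : S.IsLocal (S.Fc c) (S.Pc c) := by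
  cases c with
  | inl ib =>
      intro x y hxy
      have : S.cw [(ib.1, !ib.2), (ib.1, ib.2)] x = S.cw [(ib.1, !ib.2), (ib.1, ib.2)] y :=
        S.cw_local _ x y hxy
      simp only [Pc, this]
  | inr c =>
      cases c with
      | inl r =>
          intro x y hxy
          have : S.cw (FreeGroup.toWord r.1) x = S.cw (FreeGroup.toWord r.1) y :=
            S.cw_local _ x y hxy
          simp only [Pc, this]
      | inr p =>
          intro x y hxy
          have key : ∀ h : {a // a ∈ p.1.supp},
              (x (S.cw (S.wordOf h.1) x)).2 = (y (S.cw (S.wordOf h.1) y)).2 := by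
            intro h
            have hsub : S.D0 ^ (S.wordOf h.1).length ⊆
                S.D0 ^ (p.1.supp.sup fun a => (S.wordOf a).length) :=
              Finset.pow_subset_pow_right S.one_mem_D0
                (Finset.le_sup (f := fun a => (S.wordOf a).length) h.2)
            have h1 : S.cw (S.wordOf h.1) x = S.cw (S.wordOf h.1) y :=
              S.cw_local _ x y fun a ha => hxy a (hsub ha)
            rw [h1, hxy _ (hsub (S.cw_mem (S.wordOf h.1) y))]
          simp only [Pc]
          constructor
          · intro hx hy; exact hx fun h => (key h).trans (hy h)
          · intro hy hx; exact hy fun h => (key h).symm.trans (hx h)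

/-- the forbidden patterns of the SFT -/
noncomputable def FX : Set (Pattern G S.A) := ⋃ c : S.C, S.pats (S.Fc c) (S.Pc c)

lemma FX_finite : S.FX.Finite := by
  haveI : Finite ↥S.rels := S.relsFin.to_subtype
  haveI : Finite ↥S.FZ := S.FZfin.to_subtype
  haveI : Finite S.C := by
    unfold C; infer_instance
  exact Set.finite_iUnion fun c => S.pats_finite _ _

/-- the SFT -/
noncomputable def X : Set (G → S.A) := avoidSet S.FX

lemma mem_X_iff (x : G → S.A) : x ∈ S.X ↔ ∀ (c : S.C) (g : G), S.Pc c (shiftMul g x) := by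
  unfold X FX
  rw [avoidSet_iUnion, Set.mem_iInter]
  exact forall_congr' fun c => S.mem_avoid_pats_iff _ _ (S.Pc_local c) x

lemma X_shift (g : G) (x : G → S.A) (hx : x ∈ S.X) : shiftMul g x ∈ S.X :=
  (avoidSet_isSubshift S.FX).2 g x hx

end ChartSetup

namespace ChartSetup

open Pointwise
open scoped Classical

variable {G H : Type*} [Group G] [Group H] (S : ChartSetup G H)

/-- the cocycle evaluated on free group elements -/
noncomputable def cF (z : FreeGroup (Fin S.n)) (x : G → S.A) : G := S.cw z.toWord x

lemma cw_pair_eq_one (i : Fin S.n) (b : Bool) (x : G → S.A) (hx : x ∈ S.X) :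
    S.cw [(i, b), (i, !b)] x = 1 := by
  have := (S.mem_X_iff x).1 hx (Sum.inl (i, !b)) 1
  rw [shiftMul_one'] at this
  simpa only [Pc, Bool.not_not] using this

lemma cw_step (L₁ L₂ : List (Fin S.n × Bool)) (hstep : FreeGroup.Red.Step L₁ L₂)
    (x : G → S.A) (hx : x ∈ S.X) : S.cw L₁ x = S.cw L₂ x := by
  cases hstep with
  | @not u v i b =>
      have h1 : u ++ (i, b) :: (i, !b) :: v = u ++ ([(i, b), (i, !b)] ++ v) := rfl
      rw [h1, S.cw_append, S.cw_append, S.cw_append]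
      have hy : shiftMul (S.cw v x) x ∈ S.X := S.X_shift _ x hx
      rw [S.cw_pair_eq_one i b _ hy, one_mul]

lemma cw_red (L₁ L₂ : List (Fin S.n × Bool)) (hred : FreeGroup.Red L₁ L₂)
    (x : G → S.A) (hx : x ∈ S.X) : S.cw L₁ x = S.cw L₂ x := by
  induction hred with
  | refl => rfl
  | tail _ hstep ih => exact ih.trans (S.cw_step _ _ hstep x hx)

lemma cF_one (x : G → S.A) : S.cF 1 x = 1 := by
  unfold cF
  rw [FreeGroup.toWord_one]
  rfl

lemma cF_mul (z₁ z₂ : FreeGroup (Fin S.n)) (x : G → S.A) (hx : x ∈ S.X) :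
    S.cF (z₁ * z₂) x = S.cF z₁ (shiftMul (S.cF z₂ x) x) * S.cF z₂ x := by
  unfold cF
  have h1 : z₁ * z₂ = FreeGroup.mk (z₁.toWord ++ z₂.toWord) := by
    rw [← FreeGroup.mul_mk, FreeGroup.mk_toWord, FreeGroup.mk_toWord]
  rw [h1, FreeGroup.toWord_mk]
  rw [← S.cw_red _ _ FreeGroup.reduce.red x hx, S.cw_append]

/-- the subgroup of free group elements whose cocycle vanishes on `X` -/
noncomputable def NX : Subgroup (FreeGroup (Fin S.n)) where
  carrier := {z | ∀ x ∈ S.X, S.cF z x = 1}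
  one_mem' := fun x _ => S.cF_one x
  mul_mem' := by
    intro a b ha hb x hx
    rw [S.cF_mul a b x hx, hb x hx, shiftMul_one', ha x hx, one_mul]
  inv_mem' := by
    intro a ha x hx
    have h1 : S.cF (a⁻¹ * a) x = 1 := by rw [inv_mul_cancel]; exact S.cF_one x
    rw [S.cF_mul _ _ x hx, ha x hx, shiftMul_one', mul_one] at h1
    exact h1

lemma NX_normal : (S.NX).Normal := by
  constructor
  intro z hz u x hx
  have h1 : S.cF (z * u⁻¹) x = S.cF u⁻¹ x := by
    rw [S.cF_mul _ _ x hx, hz _ (S.X_shift _ x hx), one_mul]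
  have h2 : S.cF (u * (z * u⁻¹)) x = S.cF (u * u⁻¹) x := by
    rw [S.cF_mul _ _ x hx, S.cF_mul u u⁻¹ x hx, h1]
  rw [← mul_assoc] at h2
  rw [h2, mul_inv_cancel]
  exact S.cF_one x

lemma ncl_le_NX : Subgroup.normalClosure S.rels ≤ S.NX := by
  haveI := S.NX_normal
  apply Subgroup.normalClosure_le_normal
  intro r hr x hx
  have := (S.mem_X_iff x).1 hx (Sum.inr (Sum.inl ⟨r, hr⟩)) 1
  rw [shiftMul_one'] at this
  exact this

lemma cF_congr (z₁ z₂ : FreeGroup (Fin S.n))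
    (hz : PresentedGroup.mk S.rels z₁ = PresentedGroup.mk S.rels z₂)
    (x : G → S.A) (hx : x ∈ S.X) : S.cF z₁ x = S.cF z₂ x := by
  have hmem : z₁⁻¹ * z₂ ∈ Subgroup.normalClosure S.rels := by
    rw [← QuotientGroup.eq]
    exact hz
  have h0 : S.cF (z₁⁻¹ * z₂) x = 1 := S.ncl_le_NX hmem x hx
  have h1 : z₂ = z₁ * (z₁⁻¹ * z₂) := by group
  rw [h1, S.cF_mul _ _ x hx, h0, shiftMul_one', mul_one]

/-- the cocycle -/
noncomputable def gam (h : H) (x : G → S.A) : G := S.cF (S.repF h) x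

lemma gam_cocycle (h₁ h₂ : H) (x : G → S.A) (hx : x ∈ S.X) :
    S.gam (h₁ * h₂) x = S.gam h₁ (shiftMul (S.gam h₂ x) x) * S.gam h₂ x := by
  unfold gam
  have hmk : PresentedGroup.mk S.rels (S.repF (h₁ * h₂)) =
      PresentedGroup.mk S.rels (S.repF h₁ * S.repF h₂) := by
    rw [map_mul, S.repF_spec, S.repF_spec, S.repF_spec, map_mul]
  rw [S.cF_congr _ _ hmk x hx, S.cF_mul _ _ x hx]

lemma gam_eq_cw (h : H) : (S.gam h : (G → S.A) → G) = S.cw (S.wordOf h) := rfl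

end ChartSetup

/-- continuity of functions of configurations depending on a finite window -/
theorem continuous_of_local {G : Type*} [Group G] {A' : Type*} [Nonempty A'] (F : Finset G)
    (f : (G → A') → G) (hf : ∀ x y : G → A', (∀ a ∈ F, x a = y a) → f x = f y) :
    @Continuous (G → A') G (@Pi.topologicalSpace G (fun _ => A') (fun _ => ⊥)) ⊥ f := by
  classical
  letI : TopologicalSpace A' := ⊥
  haveI : DiscreteTopology A' := ⟨rfl⟩
  letI : TopologicalSpace G := ⊥
  let ext : ({g // g ∈ F} → A') → (G → A') := fun v g =>
    if h : g ∈ F then v ⟨g, h⟩ else Classical.arbitrary A'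
  have key : f = (fun v => f (ext v)) ∘ (fun (x : G → A') (h : {g // g ∈ F}) => x h) := by
    funext x
    refine (hf _ _ fun a ha => ?_).symm
    simp only [ext]
    rw [dif_pos ha]
  rw [key]
  exact (continuous_of_discreteTopology).comp
    (continuous_pi fun h => continuous_apply (h : G))

namespace ChartSetup

open Pointwise
open scoped Classical

variable {G H : Type*} [Group G] [Group H] (S : ChartSetup G H)

lemma gam_continuous (h : H) :
    @Continuous (G → S.A) G (@Pi.topologicalSpace G (fun _ => S.A) (fun _ => ⊥)) ⊥ (S.gam h) := by
  rw [S.gam_eq_cw h]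
  exact continuous_of_local (S.D0 ^ (S.wordOf h).length) _ (S.cw_local (S.wordOf h))

lemma chartSMul_mul (x : G → S.A) (hx : x ∈ S.X) (h₁ h₂ : H) (g : G) :
    chartSMul S.gam x (h₁ * h₂) g = chartSMul S.gam x h₁ (chartSMul S.gam x h₂ g) := by
  unfold chartSMul
  rw [← shiftMul_shiftMul (S.gam h₂ (shiftMul g x)) g x,
    S.gam_cocycle h₁ h₂ (shiftMul g x) (S.X_shift g x hx), mul_assoc]

/-- the `B`-coloring read along the orbit of `g` -/
noncomputable def oRead (x : G → S.A) (g : G) : H → S.B :=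
  fun k => (x (chartSMul S.gam x k g)).2

lemma oRead_mem (x : G → S.A) (hx : x ∈ S.X) (g : G) : S.oRead x g ∈ avoidSet S.FZ := by
  rintro p hp ⟨h₀, hh₀⟩
  set g' := chartSMul S.gam x h₀ g with hg'
  have hPc := (S.mem_X_iff x).1 hx (Sum.inr (Sum.inr ⟨p, hp⟩)) g'
  apply hPc
  intro h
  have h1 : S.cw (S.wordOf h.1) (shiftMul g' x) = S.gam h.1 (shiftMul g' x) := rfl
  rw [h1]
  have h2 : shiftMul g' x (S.gam h.1 (shiftMul g' x)) = x (chartSMul S.gam x h.1 g') := rfl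
  rw [h2, hg', ← S.chartSMul_mul x hx h.1 h₀ g]
  exact hh₀ h

lemma chart_free (x : G → S.A) (hx : x ∈ S.X) (h : H) (g : G)
    (hfix : chartSMul S.gam x h g = g) : h = 1 := by
  apply S.Zfree (S.oRead x g) (S.oRead_mem x hx g) h
  funext k
  show S.oRead x g (k * h) = S.oRead x g k
  unfold oRead
  rw [S.chartSMul_mul x hx k h g, hfix]

end ChartSetup

theorem evalWord_eq_lift {G : Type*} [Group G] {n : ℕ} (f : Fin n → G)
    (L : List (Fin n × Bool)) : evalWord f L = FreeGroup.lift f (FreeGroup.mk L) := by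
  rw [FreeGroup.lift_mk]
  unfold evalWord
  congr 1
  apply List.map_congr_left
  intro p _
  cases p.2 <;> simp

namespace ChartSetup

open Pointwise
open scoped Classical

variable {G H : Type*} [Group G] [Group H] (S : ChartSetup G H)

lemma evalWord_toWord (z : FreeGroup (Fin S.n)) :
    evalWord S.gens z.toWord = S.φ (PresentedGroup.mk S.rels z) := by
  have hhom : (FreeGroup.lift S.gens : FreeGroup (Fin S.n) →* H) =
      (S.φ.toMonoidHom.comp (PresentedGroup.mk S.rels)) := by
    apply FreeGroup.ext_hom
    intro a
    rw [FreeGroup.lift_apply_of]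
    rfl
  rw [evalWord_eq_lift, FreeGroup.mk_toWord, hhom]
  rfl

/-- the orbit equivalence relation of the translation-like action -/
def orel : Setoid G where
  r g₁ g₂ := ∃ h : H, S.α h g₁ = g₂
  iseqv := by
    constructor
    · exact fun g => ⟨1, S.α_one g⟩
    · rintro g₁ g₂ ⟨h, rfl⟩
      exact ⟨h⁻¹, by rw [← S.α_mul, inv_mul_cancel, S.α_one]⟩
    · rintro g₁ g₂ g₃ ⟨h₁, rfl⟩ ⟨h₂, rfl⟩
      exact ⟨h₂ * h₁, S.α_mul h₂ h₁ g₁⟩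

/-- a representative of the orbit of `g` -/
noncomputable def repG (g : G) : G := (Quotient.mk S.orel g).out

lemma repG_rel (g : G) : ∃ h : H, S.α h (S.repG g) = g :=
  Quotient.exact (Quotient.out_eq (Quotient.mk S.orel g))

/-- the "orbit coordinate" of `g` -/
noncomputable def hG (g : G) : H := (S.repG_rel g).choose

lemma hG_spec (g : G) : S.α (S.hG g) (S.repG g) = g := (S.repG_rel g).choose_spec

lemma α_cancel (h h' : H) (g : G) (he : S.α h g = S.α h' g) : h = h' := by
  have h1 : S.α (h'⁻¹ * h) g = g := by
    rw [S.α_mul, he, ← S.α_mul, inv_mul_cancel, S.α_one]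
  have := S.α_free _ _ h1
  rwa [inv_mul_eq_one, eq_comm] at this

lemma repG_α (h : H) (g : G) : S.repG (S.α h g) = S.repG g := by
  unfold repG
  congr 1
  exact Quotient.sound (S.orel.symm ⟨h, rfl⟩)

lemma hG_α (h : H) (g : G) : S.hG (S.α h g) = h * S.hG g := by
  apply S.α_cancel _ _ (S.repG g)
  have h1 := S.hG_spec (S.α h g)
  rw [S.repG_α h g] at h1
  rw [h1, S.α_mul, S.hG_spec]

/-- the canonical configuration -/
noncomputable def x0 : G → S.A :=
  fun g => (fun i => (S.encD _ (S.mem_D0_left i g), S.encD _ (S.mem_D0_right i g)),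
      S.z0 (S.hG g))

lemma dloc_x0 (g : G) (i : Fin S.n) (b : Bool) :
    S.dloc (shiftMul g S.x0) i b = S.α (if b then S.gens i else (S.gens i)⁻¹) g * g⁻¹ := by
  have h1 : shiftMul g S.x0 1 = S.x0 g := by
    show S.x0 (1 * g) = S.x0 g
    rw [one_mul]
  unfold dloc
  rw [h1]
  cases b <;> simp [x0, dec_encD]

lemma cw_x0 (w : List (Fin S.n × Bool)) (g : G) :
    S.cw w (shiftMul g S.x0) = S.α (evalWord S.gens w) g * g⁻¹ := by
  induction w with
  | nil =>
      show (1 : G) = S.α (evalWord S.gens []) g * g⁻¹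
      rw [show evalWord S.gens [] = 1 from rfl, S.α_one, mul_inv_cancel]
  | cons l w ih =>
      show S.dloc (shiftMul (S.cw w (shiftMul g S.x0)) (shiftMul g S.x0)) l.1 l.2 *
          S.cw w (shiftMul g S.x0) = _
      rw [ih, shiftMul_shiftMul, inv_mul_cancel_right, S.dloc_x0]
      have heval : evalWord S.gens (l :: w) =
          (if l.2 then S.gens l.1 else (S.gens l.1)⁻¹) * evalWord S.gens w := by
        unfold evalWord
        rw [List.map_cons, List.prod_cons]
      rw [heval, S.α_mul, mul_assoc, inv_mul_cancel_left]

lemma x0_mem : S.x0 ∈ S.X := by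
  rw [S.mem_X_iff]
  intro c g
  cases c with
  | inl ib =>
      show S.cw [(ib.1, !ib.2), (ib.1, ib.2)] (shiftMul g S.x0) = 1
      rw [S.cw_x0]
      have : evalWord S.gens [(ib.1, !ib.2), (ib.1, ib.2)] = 1 := by
        unfold evalWord
        cases hb : ib.2 <;> simp
      rw [this, S.α_one, mul_inv_cancel]
  | inr c =>
      cases c with
      | inl r =>
          show S.cw (FreeGroup.toWord r.1) (shiftMul g S.x0) = 1
          rw [S.cw_x0, S.evalWord_toWord]
          have h1 : PresentedGroup.mk S.rels r.1 = 1 :=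
            (QuotientGroup.eq_one_iff r.1).mpr (Subgroup.subset_normalClosure r.2)
          rw [h1, map_one, S.α_one, mul_inv_cancel]
      | inr p =>
          show ¬ ∀ h : {a // a ∈ p.1.supp},
              ((shiftMul g S.x0) (S.cw (S.wordOf h.1) (shiftMul g S.x0))).2 = p.1.val h
          intro hall
          apply S.z0mem p.1 p.2
          refine ⟨S.hG g, fun h => ?_⟩
          have h1 := hall h
          rw [S.cw_x0] at h1
          have h2 : evalWord S.gens (S.wordOf h.1) = h.1 := by
            rw [wordOf, S.evalWord_toWord, S.repF_spec]
            exact S.φ.apply_symm_apply h.1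
          rw [h2] at h1
          have h3 : shiftMul g S.x0 (S.α h.1 g * g⁻¹) = S.x0 (S.α h.1 g) := by
            show S.x0 (S.α h.1 g * g⁻¹ * g) = _
            rw [inv_mul_cancel_right]
          rw [h3] at h1
          have h4 : (S.x0 (S.α h.1 g)).2 = S.z0 (h.1 * S.hG g) := by
            show S.z0 (S.hG (S.α h.1 g)) = _
            rw [S.hG_α]
          rw [h4] at h1
          exact h1

end ChartSetup


/-- If `H, G` are finitely generated, `H` acts translation-like on `G`, `H` is finitely
presented and there is a non-empty `H`-SFT with free shift action, then there is a free
`G`-chart `(X, γ)` of `H` with `X` a non-empty `G`-SFT. -/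
theorem exists_free_SFT_chart {G H : Type*} [Group G] [Group H]
    (hGfg : Group.FG G) (hHfg : Group.FG H)
    (h1 : HasTranslationLikeAction H G)
    (h2 : IsFinitelyPresented H)
    (h3 : ∃ (B : Type) (_ : Fintype B) (Z : Set (H → B)), IsSFT Z ∧ Z.Nonempty ∧
      ∀ z ∈ Z, ∀ h : H, shiftMul h z = z → h = 1) :
    ∃ (A : Type) (_ : Fintype A) (X : Set (G → A)) (γ : H → (G → A) → G),
      IsFreeChart X γ ∧ IsSFT X ∧ X.Nonempty := by
  obtain ⟨n, rels, relsFin, ⟨φ⟩⟩ := h2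
  obtain ⟨B, instB, Z, ⟨𝓕Z, hfinZ, rfl⟩, ⟨z0, hz0⟩, hfree⟩ := h3
  obtain ⟨α, hα1, hα2, hα3, hα4⟩ := h1
  let S : ChartSetup G H :=
    ⟨n, rels, relsFin, φ, α, hα1, hα2, hα3, hα4, B, instB, 𝓕Z, hfinZ, z0, hz0, hfree⟩
  refine ⟨S.A, inferInstance, S.X, S.gam, ⟨⟨avoidSet_isSubshift _, ?_, ?_⟩, ?_⟩,
    ⟨S.FX, S.FX_finite, rfl⟩, ⟨S.x0, S.x0_mem⟩⟩
  · intro h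
    show @ContinuousOn (G → S.A) G (@Pi.topologicalSpace G (fun _ => S.A) (fun _ => ⊥)) ⊥
      (S.gam h) S.X
    exact @Continuous.continuousOn (G → S.A) G
      (@Pi.topologicalSpace G (fun _ => S.A) (fun _ => ⊥)) ⊥ (S.gam h) S.X
      (S.gam_continuous h)
  · exact fun h₁ h₂ x hx => S.gam_cocycle h₁ h₂ x hx
  · exact fun x hx h g => S.chart_free x hx h g
end

section
/- Let G be a countable group and let X = X_𝓕 ⊂ Σ^G be the subshift defined by a (possibly infinite) set of forbidden patterns 𝓕. For every finite subset F ⊂ G there exists a finite subset K ⊂ G with K ⊇ F such that a pattern p ∈ Σ^F belongs to L_F(X) if and only if there exists a locally admissible pattern q ∈ L^loc_K(X_𝓕) with q|_F = p. -/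
open Filter Topology

-- Restriction of a locally admissible pattern is locally admissible.
theorem locAdm_mono {G A : Type*} [Group G] (𝓕 : Set (Pattern G A)) {K K' : Finset G}
    (hKK : K' ⊆ K) {q : {g // g ∈ K} → A} (hq : q ∈ locallyAdmissible 𝓕 K) :
    (fun h : {g // g ∈ K'} => q ⟨h, hKK h.2⟩) ∈ locallyAdmissible 𝓕 K' := by
  rintro P hP ⟨g, hg⟩
  refine hq P hP ⟨g, fun h => ?_⟩
  obtain ⟨hk, hv⟩ := hg h
  exact ⟨hKK hk, hv⟩

theorem key_compactness {G A : Type*} [Group G] [Countable G] [Fintype A]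
    (𝓕 : Set (Pattern G A)) (F : Finset G) (p : {g // g ∈ F} → A)
    (H : ∀ K : Finset G, F ⊆ K →
      ∃ q ∈ locallyAdmissible 𝓕 K, ∀ h : {g // g ∈ F}, ∀ hk : (h : G) ∈ K, q ⟨h, hk⟩ = p h) :
    p ∈ lang (avoidSet 𝓕) F := by
  classical
  have hA : Nonempty A := by
    obtain ⟨q, -, -⟩ := H (insert 1 F) (Finset.subset_insert _ _)
    exact ⟨q ⟨1, Finset.mem_insert_self _ _⟩⟩
  inhabit A
  obtain ⟨e, he⟩ := exists_surjective_nat G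
  choose m hm using he
  set K : ℕ → Finset G := fun n => F ∪ (Finset.range n).image e with hK
  have hFK : ∀ n, F ⊆ K n := fun n => Finset.subset_union_left
  choose q hq1 hq2 using fun n => H (K n) (hFK n)
  set y : ℕ → G → A := fun n g => if h : g ∈ K n then q n ⟨g, h⟩ else default with hy
  set u : Ultrafilter ℕ := Ultrafilter.of atTop with hu
  have hof : ∀ s : Set ℕ, s ∈ (atTop : Filter ℕ) → s ∈ u :=
    fun s hs => Ultrafilter.of_le atTop hs
  have hx : ∀ g : G, ∃ a : A, {n | y n g = a} ∈ u := by
    intro g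
    by_contra hc
    push_neg at hc
    have h1 : (⋂ a : A, {n | y n g = a}ᶜ) ∈ u := by
      exact Filter.iInter_mem.2 fun a => (Ultrafilter.compl_mem_iff_notMem).2 (hc a)
    have h2 : (⋂ a : A, {n | y n g = a}ᶜ) = ∅ := by
      ext n; simp
    rw [h2] at h1
    exact Filter.empty_notMem (u : Filter ℕ) h1
  choose x hxspec using hx
  have hagree : ∀ S : Finset G, {n | ∀ s ∈ S, y n s = x s} ∈ u := by
    intro S
    have h1 : (⋂ s ∈ S, {n | y n s = x s}) ∈ u :=
      (Filter.biInter_finset_mem S).2 fun s _ => hxspec s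
    have h2 : (⋂ s ∈ S, {n | y n s = x s}) = {n | ∀ s ∈ S, y n s = x s} := by
      ext n; simp
    rwa [h2] at h1
  have hsub : ∀ S : Finset G, {n | S ⊆ K n} ∈ u := by
    intro S
    refine hof _ (Filter.eventually_atTop.2 ⟨S.sup m + 1, fun n hn s hs => ?_⟩)
    refine Finset.mem_union_right _ (Finset.mem_image.2 ⟨m s, ?_, hm s⟩)
    exact Finset.mem_range.2 (lt_of_lt_of_le (Nat.lt_succ_of_le (Finset.le_sup hs)) hn)
  have hxX : x ∈ avoidSet 𝓕 := by
    rintro P hP ⟨g, hg⟩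
    set S : Finset G := P.supp.image (fun h => h * g) with hS
    obtain ⟨n, hn1, hn2⟩ := Filter.nonempty_of_mem (Filter.inter_mem (hagree S) (hsub S))
    refine hq1 n P hP ⟨g, fun h => ?_⟩
    have hmem : (h : G) * g ∈ S := Finset.mem_image.2 ⟨h, h.2, rfl⟩
    have hk : (h : G) * g ∈ K n := hn2 hmem
    refine ⟨hk, ?_⟩
    have e1 : q n ⟨(h : G) * g, hk⟩ = y n ((h : G) * g) := by
      simp only [hy, dif_pos hk]
    rw [e1, hn1 _ hmem, hg h]
  refine ⟨x, hxX, fun h => ?_⟩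
  obtain ⟨n, hn⟩ := Filter.nonempty_of_mem (hxspec (h : G))
  have hk : (h : G) ∈ K n := hFK n h.2
  have e1 : y n (h : G) = q n ⟨h, hk⟩ := by simp only [hy, dif_pos hk]
  rw [← hn, e1, hq2 n h hk]


/-- For any countable group `G`, subshift `X_𝓕 ⊆ A^G` and finite `F ⊆ G` there is a finite
`K ⊇ F` such that a pattern on `F` is in the language of `X_𝓕` iff it extends to a locally
admissible pattern on `K`. -/
theorem lang_eq_restriction_of_locallyAdmissible
    {G : Type*} {A : Type*} [Group G] [Countable G] [Fintype A]
    (𝓕 : Set (Pattern G A)) (F : Finset G) :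
    ∃ (K : Finset G) (hFK : F ⊆ K),
      ∀ p : {g // g ∈ F} → A,
        p ∈ lang (avoidSet 𝓕) F ↔
          ∃ q ∈ locallyAdmissible 𝓕 K,
            ∀ h : {g // g ∈ F}, q ⟨(h : G), hFK h.2⟩ = p h := by

  classical
  have hKp : ∀ p : {g // g ∈ F} → A, ∃ Kp : Finset G, F ⊆ Kp ∧
      (p ∉ lang (avoidSet 𝓕) F → ∀ q ∈ locallyAdmissible 𝓕 Kp,
        ¬ ∀ h : {g // g ∈ F}, ∀ hk : (h : G) ∈ Kp, q ⟨h, hk⟩ = p h) := by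
    intro p
    by_cases hp : p ∈ lang (avoidSet 𝓕) F
    · exact ⟨F, subset_rfl, fun h => absurd hp h⟩
    · have h1 := mt (key_compactness 𝓕 F p) hp
      push_neg at h1
      obtain ⟨Kp, hKp1, hKp2⟩ := h1
      refine ⟨Kp, hKp1, fun _ q hq hext => ?_⟩
      obtain ⟨h, hk, hne⟩ := hKp2 q hq
      exact hne (hext h hk)
  choose Kp hKp1 hKp2 using hKp
  refine ⟨F ∪ Finset.univ.sup Kp, Finset.subset_union_left, fun p => ?_⟩
  constructor
  · rintro ⟨x, hx, hxp⟩
    refine ⟨fun h => x (h : G), ?_, fun h => hxp h⟩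
    rintro P hP ⟨g, hg⟩
    refine hx P hP ⟨g, fun h => ?_⟩
    obtain ⟨hk, hv⟩ := hg h
    exact hv
  · rintro ⟨q, hq, hext⟩
    by_contra hp
    have hsub : Kp p ⊆ F ∪ Finset.univ.sup Kp :=
      Finset.Subset.trans (Finset.le_sup (Finset.mem_univ p)) Finset.subset_union_right
    refine hKp2 p hp _ (locAdm_mono 𝓕 hsub hq) fun h hk => ?_
    exact hext h
end

section
/- Let G₁ and G₂ be infinite finitely generated groups. Then the direct product G₁ × G₂ admits a translation-like action of ℤ². -/
open Filter Topology

section SewardProof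

open Filter Topology Pointwise Function

set_option linter.unusedSectionVars false
section
namespace SewardAux

variable {G : Type*} [Group G]

def disp {G : Type*} [Group G] (σ : G → G) : Set G := Set.range fun g => σ g * g⁻¹

section Core
variable {G : Type*} [Group G]
variable (p : G → G)

/-- descendants of `v` in the spanning tree given by parent map `p` -/
def DD (v : G) : Set G := {x | ∃ k : ℕ, p^[k] x = v}

def Heavy (v : G) : Prop := (DD p v).Infinite

-- a chosen heavy child
open Classical in
noncomputable def hc (v : G) : G :=
  if h : ∃ c, p c = v ∧ c ≠ v ∧ Heavy p c then h.choose else 1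

lemma mem_DD_self (v : G) : v ∈ DD p v := ⟨0, rfl⟩

lemma DD_sub (x v : G) (hx : x ∈ DD p v) : DD p x ⊆ DD p v := by
  obtain ⟨b, hb⟩ := hx
  rintro z ⟨a, ha⟩
  exact ⟨b + a, by rw [iterate_add_apply, ha, hb]⟩

variable {E : Set G} (ν : G → ℕ)
variable (hp1 : p 1 = 1) (hpE : ∀ g : G, g ≠ 1 → g * (p g)⁻¹ ∈ E)
  (hpν : ∀ g : G, g ≠ 1 → ν (p g) < ν g) (hEfin : E.Finite)
variable (hE1 : (1:G) ∈ E) (hEsym : ∀ a ∈ E, a⁻¹ ∈ E)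

section
include hpν

lemma to_one : ∀ x : G, ∃ k : ℕ, p^[k] x = 1 := by
  have key : ∀ (n : ℕ) (x : G), ν x ≤ n → ∃ k : ℕ, p^[k] x = 1 := by
    intro n
    induction n with
    | zero =>
      intro x hx
      by_cases h1 : x = 1
      · exact ⟨0, h1⟩
      · exact absurd (hpν x h1) (by omega)
    | succ n ih =>
      intro x hx
      by_cases h1 : x = 1
      · exact ⟨0, h1⟩
      · obtain ⟨k, hk⟩ := ih (p x) (by have := hpν x h1; omega)
        exact ⟨k + 1, by rwa [iterate_succ_apply]⟩
  exact fun x => key (ν x) x le_rfl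

lemma heavy_one [Infinite G] : Heavy p 1 := by
  have : DD p 1 = Set.univ := Set.eq_univ_of_forall (fun x => to_one p ν hpν x)
  rw [Heavy, this]
  exact Set.infinite_univ

end

section
include hp1 hpE hEfin

lemma Ch_finite (v : G) : {c : G | p c = v ∧ c ≠ v}.Finite := by
  refine ((hEfin.image (fun a => a * v))).subset ?_
  rintro c ⟨hpc, hne⟩
  have hc1 : c ≠ 1 := by
    rintro rfl
    have hv1 : v = 1 := by rw [← hpc, hp1]
    exact hne hv1.symm
  refine ⟨c * v⁻¹, ?_, by group⟩
  rw [← hpc]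
  exact hpE c hc1

lemma heavy_child {v : G} (hv : Heavy p v) : ∃ c, p c = v ∧ c ≠ v ∧ Heavy p c := by
  by_contra hno
  push_neg at hno
  have hsub : DD p v ⊆ {v} ∪ ⋃ c ∈ {c : G | p c = v ∧ c ≠ v}, DD p c := by
    intro x hx
    by_cases hxv : x = v
    · exact Or.inl (by simp [hxv])
    · classical
      have hkfind : ∃ k, p^[k] x = v := hx
      set k₀ := Nat.find hkfind with hk₀
      have hk₀spec : p^[k₀] x = v := Nat.find_spec hkfind
      have hk₀0 : k₀ ≠ 0 := by
        rintro h0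
        exact hxv (by rw [← hk₀spec, h0]; rfl)
      have hpc : p (p^[k₀ - 1] x) = v := by
        have h2 : p^[(k₀ - 1) + 1] x = v := by
          rw [Nat.sub_add_cancel (Nat.one_le_iff_ne_zero.2 hk₀0)]; exact hk₀spec
        rwa [iterate_succ_apply'] at h2
      have hcv : p^[k₀ - 1] x ≠ v := by
        intro hcv
        exact Nat.find_min hkfind (m := k₀ - 1) (by omega) hcv
      exact Or.inr (Set.mem_biUnion ⟨hpc, hcv⟩ ⟨k₀ - 1, rfl⟩)
  refine hv (Set.Finite.subset ?_ hsub)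
  refine (Set.finite_singleton v).union ?_
  refine Set.Finite.biUnion (Ch_finite p hp1 hpE hEfin v) ?_
  intro c hcmem
  have := hno c hcmem.1 hcmem.2
  rwa [Heavy, Set.not_infinite] at this

lemma hc_spec {v : G} (hv : Heavy p v) :
    p (hc p v) = v ∧ hc p v ≠ v ∧ Heavy p (hc p v) := by
  have h := heavy_child p hp1 hpE hEfin hv
  rw [hc, dif_pos h]
  exact h.choose_spec

lemma hc_ne_one {v : G} (hv : Heavy p v) : hc p v ≠ 1 := by
  intro h
  obtain ⟨h1, h2, _⟩ := hc_spec p hp1 hpE hEfin hv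
  rw [h] at h1 h2
  exact h2 (by rw [← h1, hp1])

end


section Idx
open Classical in
noncomputable def idx (ν : G → ℕ) (hpν : ∀ g : G, g ≠ 1 → ν (p g) < ν g) (v : G) : ℕ :=
  if h : v ≠ 1 ∧ hc p (p v) = v ∧ Heavy p (p v) then idx ν hpν (p v) + 1 else 0
termination_by ν v
decreasing_by exact hpν v h.1

include hpν

lemma idx_succ {v : G} (h : v ≠ 1 ∧ hc p (p v) = v ∧ Heavy p (p v)) :
    idx p ν hpν v = idx p ν hpν (p v) + 1 := by
  rw [idx, dif_pos h]

lemma idx_zero {v : G} (h : ¬(v ≠ 1 ∧ hc p (p v) = v ∧ Heavy p (p v))) :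
    idx p ν hpν v = 0 := by
  rw [idx, dif_neg h]

lemma idx_branch {v : G} (h : 0 < idx p ν hpν v) :
    v ≠ 1 ∧ hc p (p v) = v ∧ Heavy p (p v) := by
  by_contra hn
  rw [idx_zero p ν hpν hn] at h
  omega

lemma idx_iter {v : G} : ∀ j, j ≤ idx p ν hpν v →
    idx p ν hpν (p^[j] v) = idx p ν hpν v - j ∧ (hc p)^[j] (p^[j] v) = v ∧
      (0 < j → Heavy p (p^[j] v)) := by
  intro j
  induction j generalizing v with
  | zero => intro _; exact ⟨by simp, rfl, by omega⟩
  | succ j ih =>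
    intro hj
    have h0 : 0 < idx p ν hpν v := by omega
    obtain ⟨h1, h2, h3⟩ := idx_branch p ν hpν h0
    have hs : idx p ν hpν v = idx p ν hpν (p v) + 1 := idx_succ p ν hpν ⟨h1, h2, h3⟩
    have hj' : j ≤ idx p ν hpν (p v) := by omega
    obtain ⟨e1, e2, e3⟩ := ih hj'
    rw [iterate_succ_apply (f := p)]
    refine ⟨by rw [e1]; omega, ?_, ?_⟩
    · rw [iterate_succ_apply' (f := hc p), e2, h2]
    · intro _
      rcases Nat.eq_zero_or_pos j with hj0 | hj0
      · subst hj0; simpa using h3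
      · exact e3 hj0
end Idx

section HancPiece
include hp1 hpE hEfin

lemma p_hc_iter {v : G} (hv : Heavy p v) : ∀ i : ℕ,
    Heavy p ((hc p)^[i] v) ∧ p^[i] ((hc p)^[i] v) = v := by
  intro i
  induction i with
  | zero => exact ⟨hv, rfl⟩
  | succ i ih =>
    obtain ⟨ihh, ihe⟩ := ih
    obtain ⟨e1, _, e3⟩ := hc_spec p hp1 hpE hEfin ihh
    constructor
    · rw [iterate_succ_apply' (f := hc p)]; exact e3
    · rw [iterate_succ_apply' (f := hc p), iterate_succ_apply (f := p), e1, ihe]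

include hpν

lemma idx_hc {v : G} (hv : Heavy p v) :
    idx p ν hpν (hc p v) = idx p ν hpν v + 1 := by
  obtain ⟨e1, _, e3⟩ := hc_spec p hp1 hpE hEfin hv
  have h2 : hc p (p (hc p v)) = hc p v := by rw [e1]
  have h3 : Heavy p (p (hc p v)) := by rw [e1]; exact hv
  rw [idx_succ p ν hpν ⟨hc_ne_one p hp1 hpE hEfin hv, h2, h3⟩, e1]

lemma idx_hc_iter {v : G} (hv : Heavy p v) (i : ℕ) :
    idx p ν hpν ((hc p)^[i] v) = idx p ν hpν v + i := by
  induction i with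
  | zero => rfl
  | succ i ih =>
    rw [iterate_succ_apply' (f := hc p),
      idx_hc p ν hp1 hpE hpν hEfin (p_hc_iter p hp1 hpE hEfin hv i).1, ih]
    omega

end HancPiece

section Hanc
include hpν in
lemma exists_heavy_anc [Infinite G] (g : G) : ∃ m : ℕ, Heavy p (p^[m] g) := by
  obtain ⟨k, hk⟩ := to_one p ν hpν g
  exact ⟨k, by rw [hk]; exact heavy_one p ν hpν⟩

open Classical in
noncomputable def hanc (hex : ∀ g : G, ∃ m : ℕ, Heavy p (p^[m] g)) (g : G) : G :=
  p^[Nat.find (hex g)] g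

variable (hex : ∀ g : G, ∃ m : ℕ, Heavy p (p^[m] g))

open Classical

lemma hanc_heavy (g : G) : Heavy p (hanc p hex g) := Nat.find_spec (hex g)

lemma hanc_of_heavy {g : G} (hg : Heavy p g) : hanc p hex g = g := by
  rw [hanc]
  have : Nat.find (hex g) = 0 := (Nat.find_eq_zero (hex g)).2 hg
  rw [this]; rfl

lemma hanc_light {g : G} (hg : ¬ Heavy p g) : hanc p hex g = hanc p hex (p g) := by
  have h1 : Nat.find (hex g) = Nat.find (hex (p g)) + 1 := by
    have hge : 1 ≤ Nat.find (hex g) := by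
      rcases Nat.eq_zero_or_pos (Nat.find (hex g)) with h0 | h0
      · exact absurd (by have := Nat.find_spec (hex g); rwa [h0] at this) hg
      · omega
    apply le_antisymm
    · apply Nat.find_le
      rw [iterate_succ_apply]
      exact Nat.find_spec (hex (p g))
    · have : Heavy p (p^[Nat.find (hex g) - 1] (p g)) := by
        rw [← iterate_succ_apply, Nat.succ_eq_add_one, Nat.sub_add_cancel hge]
        exact Nat.find_spec (hex g)
      have h2 := Nat.find_le (h := hex (p g)) this
      omega
  rw [hanc, hanc, h1, iterate_succ_apply]

include hp1 hpE hEfin in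
lemma cluster_finite (v : G) : {x : G | hanc p hex x = v}.Finite := by
  by_cases hv : Heavy p v
  · have hsub : {x : G | hanc p hex x = v} ⊆
        {v} ∪ ⋃ c ∈ {c : G | p c = v ∧ c ≠ v ∧ ¬ Heavy p c}, DD p c := by
      intro x hx
      by_cases hxv : x = v
      · exact Or.inl (by simp [hxv])
      · set k := Nat.find (hex x) with hkdef
        have hk : p^[k] x = v := hx
        have hk0 : k ≠ 0 := by rintro h0; rw [h0] at hk; exact hxv hk
        have hpc : p (p^[k - 1] x) = v := by
          have h2 : p^[(k - 1) + 1] x = v := by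
            rw [Nat.sub_add_cancel (Nat.one_le_iff_ne_zero.2 hk0)]; exact hk
          rwa [iterate_succ_apply'] at h2
        have hlight : ¬ Heavy p (p^[k - 1] x) := Nat.find_min (hex x) (by omega)
        have hcv : p^[k - 1] x ≠ v := fun h => hlight (h ▸ hv)
        exact Or.inr (Set.mem_biUnion ⟨hpc, hcv, hlight⟩ ⟨k - 1, rfl⟩)
    refine Set.Finite.subset ?_ hsub
    refine (Set.finite_singleton v).union ?_
    refine Set.Finite.biUnion ((Ch_finite p hp1 hpE hEfin v).subset
      (fun c hc => ⟨hc.1, hc.2.1⟩)) ?_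
    intro c hcmem
    rw [← Set.not_infinite]
    exact hcmem.2.2
  · refine Set.Finite.subset (Set.finite_empty) ?_
    intro x hx
    exact absurd (hx ▸ hanc_heavy p hex x) hv

end Hanc

section Piece
variable (hex : ∀ g : G, ∃ m : ℕ, Heavy p (p^[m] g)) (m : ℕ)

noncomputable def blockRoot (v : G) : G := p^[idx p ν hpν v % m] v

noncomputable def pieceOf (w : G) : Set G := {x | ∃ i < m, hanc p hex x = (hc p)^[i] w}

noncomputable def piece (g : G) : Set G :=
  pieceOf p hex m (blockRoot p ν hpν m (hanc p hex g))

include hpν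

lemma br_hc {v : G} : (hc p)^[idx p ν hpν v % m] (blockRoot p ν hpν m v) = v :=
  (idx_iter p ν hpν _ (Nat.mod_le _ _)).2.1

lemma br_heavy {v : G} (hv : Heavy p v) : Heavy p (blockRoot p ν hpν m v) := by
  rcases Nat.eq_zero_or_pos (idx p ν hpν v % m) with h0 | h0
  · rw [blockRoot, h0]; exact hv
  · exact (idx_iter p ν hpν _ (Nat.mod_le _ _)).2.2 h0

lemma br_idx : idx p ν hpν (blockRoot p ν hpν m v) = idx p ν hpν v - idx p ν hpν v % m :=
  (idx_iter p ν hpν _ (Nat.mod_le _ _)).1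

lemma br_idx_mod (hm : 0 < m) : idx p ν hpν (blockRoot p ν hpν m v) % m = 0 := by
  rw [br_idx p ν hpν]
  have h := Nat.mod_add_div (idx p ν hpν v) m
  have : idx p ν hpν v - idx p ν hpν v % m = m * (idx p ν hpν v / m) := by omega
  rw [this, Nat.mul_mod_right]

include hp1 hpE hEfin

lemma br_of_spine {w : G} (hw : Heavy p w) (hw0 : idx p ν hpν w % m = 0) (hm : 0 < m) :
    ∀ i < m, blockRoot p ν hpν m ((hc p)^[i] w) = w := by
  intro i him
  have hidx : idx p ν hpν ((hc p)^[i] w) = idx p ν hpν w + i :=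
    idx_hc_iter p ν hp1 hpE hpν hEfin hw i
  have hmod : idx p ν hpν ((hc p)^[i] w) % m = i := by
    rw [hidx, Nat.add_mod, hw0, Nat.zero_add, Nat.mod_mod_of_dvd, Nat.mod_eq_of_lt him]
    exact dvd_refl m
  rw [blockRoot, hmod]
  exact (p_hc_iter p hp1 hpE hEfin hw i).2

lemma mem_piece_self (hm : 0 < m) (g : G) : g ∈ piece p ν hpν hex m g := by
  refine ⟨idx p ν hpν (hanc p hex g) % m, Nat.mod_lt _ hm, ?_⟩
  exact (br_hc p ν hpν m).symm

lemma spine_mem (hm : 0 < m) (g : G) {i : ℕ} (him : i < m) :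
    (hc p)^[i] (blockRoot p ν hpν m (hanc p hex g)) ∈ piece p ν hpν hex m g := by
  have hbr : Heavy p (blockRoot p ν hpν m (hanc p hex g)) :=
    br_heavy p ν hpν m (hanc_heavy p hex g)
  have hh : Heavy p ((hc p)^[i] (blockRoot p ν hpν m (hanc p hex g))) :=
    (p_hc_iter p hp1 hpE hEfin hbr i).1
  exact ⟨i, him, hanc_of_heavy p hex hh⟩

lemma piece_eq (hm : 0 < m) {g x : G} (hx : x ∈ piece p ν hpν hex m g) :
    piece p ν hpν hex m x = piece p ν hpν hex m g := by
  obtain ⟨i, him, hi⟩ := hx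
  rw [piece, hi, br_of_spine p ν hp1 hpE hpν hEfin m
    (br_heavy p ν hpν m (hanc_heavy p hex g)) (br_idx_mod p ν hpν m hm) hm i him]
  rfl

lemma piece_finite (g : G) : (piece p ν hpν hex m g).Finite := by
  refine Set.Finite.subset (Set.Finite.biUnion (Set.finite_Iio m) (fun i _ =>
    cluster_finite p hp1 hpE hEfin hex
      ((hc p)^[i] (blockRoot p ν hpν m (hanc p hex g))))) ?_
  rintro x ⟨i, him, hi⟩
  exact Set.mem_biUnion him hi

lemma piece_closed [Infinite G] (hm : 0 < m) {g x : G} (hx : x ∈ piece p ν hpν hex m g)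
    (hxr : x ≠ blockRoot p ν hpν m (hanc p hex g)) :
    p x ∈ piece p ν hpν hex m g ∧ x ≠ 1 := by
  obtain ⟨i, him, hi⟩ := hx
  set w := blockRoot p ν hpν m (hanc p hex g) with hw
  have hbrh : Heavy p w := br_heavy p ν hpν m (hanc_heavy p hex g)
  by_cases hheavy : Heavy p x
  · have hxw : x = (hc p)^[i] w := by rw [← hi, hanc_of_heavy p hex hheavy]
    have hi0 : i ≠ 0 := by rintro rfl; exact hxr hxw
    obtain ⟨j, rfl⟩ := Nat.exists_eq_succ_of_ne_zero hi0
    have hwj : Heavy p ((hc p)^[j] w) := (p_hc_iter p hp1 hpE hEfin hbrh j).1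
    have hxsucc : x = hc p ((hc p)^[j] w) := by rw [hxw, iterate_succ_apply']
    constructor
    · have : p x = (hc p)^[j] w := by
        rw [hxsucc, (hc_spec p hp1 hpE hEfin hwj).1]
      rw [this]
      exact spine_mem p ν hp1 hpE hpν hEfin hex m hm g (by omega)
    · rw [hxsucc]
      exact hc_ne_one p hp1 hpE hEfin hwj
  · constructor
    · exact ⟨i, him, by rw [← hanc_light p hex hheavy]; exact hi⟩
    · rintro rfl
      exact hheavy (heavy_one p ν hpν)

include hpν in
lemma nu_hc_lt {v : G} (hv : Heavy p v) : ν v < ν (hc p v) := by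
  have h := hpν (hc p v) (hc_ne_one p hp1 hpE hEfin hv)
  rwa [(hc_spec p hp1 hpE hEfin hv).1] at h

lemma hc_iter_injOn {v : G} (hv : Heavy p v) {i j : ℕ} (hij : i < j) :
    (hc p)^[i] v ≠ (hc p)^[j] v := by
  have mono : ∀ a b : ℕ, a < b → ν ((hc p)^[a] v) < ν ((hc p)^[b] v) := by
    intro a b hab
    have step : ∀ c : ℕ, ν ((hc p)^[c] v) < ν ((hc p)^[c+1] v) := by
      intro c
      rw [iterate_succ_apply']
      exact nu_hc_lt p ν hp1 hpE hpν hEfin (p_hc_iter p hp1 hpE hEfin hv c).1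
    exact strictMono_nat_of_lt_succ step hab
  intro h
  have := mono i j hij
  rw [h] at this
  omega

end Piece

section Sek

include hp1 hpν in
lemma nu_iter_le (j : ℕ) (x : G) : ν (p^[j] x) ≤ ν x := by
  induction j generalizing x with
  | zero => exact le_rfl
  | succ j ih =>
    rw [iterate_succ_apply]
    refine le_trans (ih (p x)) ?_
    by_cases hx : x = 1
    · rw [hx, hp1]
    · exact le_of_lt (hpν x hx)

include hpν in
lemma chain_to_root (V : Finset G) (r : G) (hcl : ∀ x ∈ V, x ≠ r → p x ∈ V ∧ x ≠ 1) :
    ∀ x ∈ V, ∃ k : ℕ, p^[k] x = r ∧ ∀ j, j ≤ k → p^[j] x ∈ V := by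
  have key : ∀ (n : ℕ) (x : G), ν x ≤ n → x ∈ V →
      ∃ k : ℕ, p^[k] x = r ∧ ∀ j, j ≤ k → p^[j] x ∈ V := by
    intro n
    induction n with
    | zero =>
      intro x hx hxV
      by_cases hxr : x = r
      · exact ⟨0, hxr, fun j hj => by rw [Nat.le_zero.1 hj]; exact hxV⟩
      · obtain ⟨_, hx1⟩ := hcl x hxV hxr
        exact absurd (hpν x hx1) (by omega)
    | succ n ihn =>
      intro x hx hxV
      by_cases hxr : x = r
      · exact ⟨0, hxr, fun j hj => by rw [Nat.le_zero.1 hj]; exact hxV⟩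
      · obtain ⟨hpxV, hx1⟩ := hcl x hxV hxr
        obtain ⟨k, hk, hkV⟩ := ihn (p x) (by have := hpν x hx1; omega) hpxV
        refine ⟨k + 1, by rwa [iterate_succ_apply], ?_⟩
        intro j hj
        cases j with
        | zero => exact hxV
        | succ j => rw [iterate_succ_apply]; exact hkV j (by omega)
  exact fun x hxV => key (ν x) x le_rfl hxV

include hpν in
lemma exists_root_child (V : Finset G) (r : G)
    (hcl : ∀ x ∈ V, x ≠ r → p x ∈ V ∧ x ≠ 1) {x : G} (hx : x ∈ V) (hxr : x ≠ r) :
    ∃ u, u ∈ V ∧ p u = r ∧ u ≠ r ∧ ∃ j : ℕ, p^[j] x = u := by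
  obtain ⟨k, hk, hkV⟩ := chain_to_root p ν hpν V r hcl x hx
  classical
  have hexk : ∃ k, p^[k] x = r := ⟨k, hk⟩
  set k₀ := Nat.find hexk with hk₀def
  have hk₀ : p^[k₀] x = r := Nat.find_spec hexk
  have hk₀le : k₀ ≤ k := Nat.find_min' hexk hk
  have hk₀0 : k₀ ≠ 0 := fun h0 => hxr (by rw [← hk₀, h0]; rfl)
  refine ⟨p^[k₀ - 1] x, hkV _ (by omega), ?_, ?_, ⟨k₀ - 1, rfl⟩⟩
  · have h2 : p^[(k₀ - 1) + 1] x = r := by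
      rw [Nat.sub_add_cancel (Nat.one_le_iff_ne_zero.2 hk₀0)]; exact hk₀
    rwa [iterate_succ_apply'] at h2
  · exact fun h => Nat.find_min hexk (m := k₀ - 1) (by omega) h

def Rel (E : Set G) : G → G → Prop := fun a b => b * a⁻¹ ∈ E * E * E

include hEsym in
lemma EEE_symm {x : G} (hx : x ∈ E * E * E) : x⁻¹ ∈ E * E * E := by
  obtain ⟨ab, hab, c, hc, rfl⟩ := hx
  obtain ⟨a, ha, b, hb, rfl⟩ := hab
  have : (a * b * c)⁻¹ = c⁻¹ * b⁻¹ * a⁻¹ := by group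
  rw [this]
  exact Set.mul_mem_mul (Set.mul_mem_mul (hEsym c hc) (hEsym b hb)) (hEsym a ha)

include hEsym in
lemma Rel_symm {a b : G} (h : Rel E a b) : Rel E b a := by
  have := EEE_symm (E := E) hEsym h
  rwa [mul_inv_rev, inv_inv] at this

include hp1 hpE hpν hEfin hE1 hEsym in
lemma sek [DecidableEq G] : ∀ (N : ℕ) (V : Finset G) (r v : G), V.card ≤ N → r ∈ V → v ∈ V →
    (∀ x ∈ V, x ≠ r → p x ∈ V ∧ x ≠ 1) → (v ≠ r ∨ V = {r}) →
    ∃ L : List G, L.Nodup ∧ L.toFinset = V ∧ L.head? = some r ∧ L.getLast? = some v ∧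
      List.Chain' (Rel E) L := by
  intro N
  induction N with
  | zero =>
    intro V r v hcard hr _ _ _
    exact absurd (Finset.card_pos.2 ⟨r, hr⟩) (by omega)
  | succ N ih =>
    intro V r v hcard hr hv hcl hvr
    classical
    by_cases hsing : V = {r}
    · have hveq : v = r := Finset.mem_singleton.1 (hsing ▸ hv)
      exact ⟨[r], by simp, by simp [hsing], rfl, by simp [hveq], List.isChain_singleton _⟩
    · have hvr' : v ≠ r := hvr.resolve_right hsing
      obtain ⟨w, hwV, hpw, hwr, jv, hjv⟩ := exists_root_child p ν hpν V r hcl hv hvr'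
      have hw1 : w ≠ 1 := (hcl w hwV hwr).2
      set Vb := V.filter (fun x => ∃ j : ℕ, p^[j] x = w) with hVbdef
      set Vu := V \ Vb with hVudef
      have hwVb : w ∈ Vb := Finset.mem_filter.2 ⟨hwV, ⟨0, rfl⟩⟩
      have hrVb : r ∉ Vb := by
        intro hrB
        obtain ⟨j, hj⟩ := (Finset.mem_filter.1 hrB).2
        have h1 : ν (p^[j] r) ≤ ν r := nu_iter_le p ν hp1 hpν j r
        have h2 : ν r < ν w := by have := hpν w hw1; rwa [hpw] at this
        rw [hj] at h1; omega
      have hrVu : r ∈ Vu := Finset.mem_sdiff.2 ⟨hr, hrVb⟩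
      have hclb : ∀ x ∈ Vb, x ≠ w → p x ∈ Vb ∧ x ≠ 1 := by
        intro x hx hxw
        obtain ⟨hxV, j, hj⟩ := Finset.mem_filter.1 hx
        have hxr : x ≠ r := fun h => hrVb (h ▸ hx)
        obtain ⟨hpxV, hx1⟩ := hcl x hxV hxr
        have hj0 : j ≠ 0 := by rintro rfl; exact hxw hj
        refine ⟨Finset.mem_filter.2 ⟨hpxV, ⟨j - 1, ?_⟩⟩, hx1⟩
        rw [← iterate_succ_apply, Nat.succ_eq_add_one, Nat.sub_add_cancel (Nat.one_le_iff_ne_zero.2 hj0)]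
        exact hj
      have hclu : ∀ x ∈ Vu, x ≠ r → p x ∈ Vu ∧ x ≠ 1 := by
        intro x hx hxr
        obtain ⟨hxV, hxnB⟩ := Finset.mem_sdiff.1 hx
        obtain ⟨hpxV, hx1⟩ := hcl x hxV hxr
        refine ⟨Finset.mem_sdiff.2 ⟨hpxV, ?_⟩, hx1⟩
        intro hpB
        obtain ⟨_, j, hj⟩ := Finset.mem_filter.1 hpB
        exact hxnB (Finset.mem_filter.2 ⟨hxV, ⟨j + 1, by rw [iterate_succ_apply]; exact hj⟩⟩)
      have hvVb : v ∈ Vb := Finset.mem_filter.2 ⟨hv, ⟨jv, hjv⟩⟩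
      have hcardb : Vb.card ≤ N := by
        have : Vb.card < V.card := Finset.card_lt_card
          ((Finset.ssubset_iff_of_subset (Finset.filter_subset _ _)).2 ⟨r, hr, hrVb⟩)
        omega
      have hcardu : Vu.card ≤ N := by
        have hwnu : w ∉ Vu := fun h => (Finset.mem_sdiff.1 h).2 hwVb
        have : Vu.card < V.card := Finset.card_lt_card
          ((Finset.ssubset_iff_of_subset (Finset.sdiff_subset)).2 ⟨w, hwV, hwnu⟩)
        omega
      obtain ⟨L₁, hL₁nd, hL₁fs, hL₁h, hL₁c, u', hL₁l, hu'alt, hu'V⟩ :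
          ∃ L₁ : List G, L₁.Nodup ∧ L₁.toFinset = Vu ∧ L₁.head? = some r ∧
            List.Chain' (Rel E) L₁ ∧
            ∃ u', L₁.getLast? = some u' ∧ (u' = r ∨ (p u' = r ∧ u' ≠ 1)) ∧ u' ∈ Vu := by
        by_cases hVusing : Vu = {r}
        · exact ⟨[r], by simp, by simp [hVusing], rfl, List.isChain_singleton _, r, rfl, Or.inl rfl, hrVu⟩
        · have hex2 : ∃ x ∈ Vu, x ≠ r := by
            by_contra hno; push_neg at hno
            exact hVusing (Finset.eq_singleton_iff_unique_mem.2 ⟨hrVu, fun x hx => hno x hx⟩)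
          obtain ⟨x0, hx0, hx0r⟩ := hex2
          obtain ⟨u', hu'V, hpu', hu'r, _⟩ := exists_root_child p ν hpν Vu r hclu hx0 hx0r
          have hu'1 : u' ≠ 1 := (hclu u' hu'V hu'r).2
          obtain ⟨L₁, a, b, c, d, e⟩ := ih Vu r u' hcardu hrVu hu'V hclu (Or.inl hu'r)
          exact ⟨L₁, a, b, c, e, u', d, Or.inr ⟨hpu', hu'1⟩, hu'V⟩
      obtain ⟨L₂, hL₂nd, hL₂fs, z, hL₂h, hzalt, hzVb, hL₂l, hL₂c⟩ :
          ∃ L₂ : List G, L₂.Nodup ∧ L₂.toFinset = Vb ∧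
            ∃ z, L₂.head? = some z ∧ (z = w ∨ (p z = w ∧ z ≠ 1)) ∧ z ∈ Vb ∧
              L₂.getLast? = some v ∧ List.Chain' (Rel E) L₂ := by
        by_cases hvw : v = w
        · by_cases hVbsing : Vb = {w}
          · exact ⟨[w], by simp, by simp [hVbsing], w, rfl, Or.inl rfl, hwVb,
              by simp [hvw], List.isChain_singleton _⟩
          · have hex2 : ∃ x ∈ Vb, x ≠ w := by
              by_contra hno; push_neg at hno
              exact hVbsing (Finset.eq_singleton_iff_unique_mem.2 ⟨hwVb, fun x hx => hno x hx⟩)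
            obtain ⟨x0, hx0, hx0w⟩ := hex2
            obtain ⟨d, hdV, hpd, hdw, _⟩ := exists_root_child p ν hpν Vb w hclb hx0 hx0w
            have hd1 : d ≠ 1 := (hclb d hdV hdw).2
            obtain ⟨L, a, b, c, dd, e⟩ := ih Vb w d hcardb hwVb hdV hclb (Or.inl hdw)
            refine ⟨L.reverse, List.nodup_reverse.2 a, by rw [List.toFinset_reverse, b], d,
              ?_, Or.inr ⟨hpd, hd1⟩, hdV, ?_, ?_⟩
            · rw [List.head?_reverse, dd]
            · rw [List.getLast?_reverse, c, hvw]
            · refine List.isChain_reverse.2 ?_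
              exact List.IsChain.imp (fun a b hab => Rel_symm (E := E) hEsym hab) e
        · obtain ⟨L₂, a, b, c, d, e⟩ := ih Vb w v hcardb hwVb hvVb hclb (Or.inl hvw)
          exact ⟨L₂, a, b, w, c, Or.inl rfl, hwVb, d, e⟩
      have hL₁ne : L₁ ≠ [] := by intro h; rw [h] at hL₁h; cases hL₁h
      have hL₂ne : L₂ ≠ [] := by intro h; rw [h] at hL₂h; cases hL₂h
      refine ⟨L₁ ++ L₂, ?_, ?_, ?_, ?_, ?_⟩
      · rw [List.nodup_append]
        refine ⟨hL₁nd, hL₂nd, fun a ha b hab heq => ?_⟩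
        have h1 : a ∈ Vu := by rw [← hL₁fs]; exact List.mem_toFinset.2 ha
        have h2 : a ∈ Vb := by rw [← hL₂fs]; exact List.mem_toFinset.2 (heq ▸ hab)
        exact (Finset.mem_sdiff.1 h1).2 h2
      · rw [List.toFinset_append, hL₁fs, hL₂fs]
        exact Finset.sdiff_union_of_subset (Finset.filter_subset _ _)
      · rw [List.head?_append_of_ne_nil _ hL₁ne, hL₁h]
      · rw [List.getLast?_append_of_ne_nil _ hL₂ne, hL₂l]
      · refine List.isChain_append.2 ?_
        refine ⟨hL₁c, hL₂c, ?_⟩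
        intro x hx y hy
        rw [hL₁l] at hx
        rw [hL₂h] at hy
        cases hx; cases hy
        -- goal : Rel E u' z
        show z * u'⁻¹ ∈ E * E * E
        have hfact : z * u'⁻¹ = (z * w⁻¹) * (w * r⁻¹) * (r * u'⁻¹) := by group
        rw [hfact]
        have hf1 : z * w⁻¹ ∈ E := by
          rcases hzalt with rfl | ⟨hpz, hz1⟩
          · simpa using hE1
          · have := hpE z hz1; rwa [hpz] at this
        have hf2 : w * r⁻¹ ∈ E := by
          have := hpE w hw1; rwa [hpw] at this
        have hf3 : r * u'⁻¹ ∈ E := by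
          rcases hu'alt with rfl | ⟨hpu', hu'1⟩
          · simpa using hE1
          · have h4 := hpE u' hu'1
            rw [hpu'] at h4
            have := hEsym _ h4
            rwa [mul_inv_rev, inv_inv] at this
        exact Set.mul_mem_mul (Set.mul_mem_mul hf1 hf2) hf3

end Sek

section Assemble

lemma head?_get' {α : Type*} (L : List α) (h : 0 < L.length) :
    L.head? = some (L.get ⟨0, h⟩) := by
  cases L with
  | nil => simp at h
  | cons a l => rfl

lemma next_congr' {α : Type*} [DecidableEq α] {L₁ L₂ : List α} (e : L₁ = L₂) (x : α)
    (hx₁ : x ∈ L₁) (hx₂ : x ∈ L₂) : L₁.next x hx₁ = L₂.next x hx₂ := by subst e; rfl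

lemma prev_congr' {α : Type*} [DecidableEq α] {L₁ L₂ : List α} (e : L₁ = L₂) (x : α)
    (hx₁ : x ∈ L₁) (hx₂ : x ∈ L₂) : L₁.prev x hx₁ = L₂.prev x hx₂ := by subst e; rfl

lemma prev_congr_elem {α : Type*} [DecidableEq α] (L : List α) {x y : α} (e : x = y)
    (hx : x ∈ L) (hy : y ∈ L) : L.prev x hx = L.prev y hy := by subst e; rfl

lemma next_congr_elem {α : Type*} [DecidableEq α] (L : List α) {x y : α} (e : x = y)
    (hx : x ∈ L) (hy : y ∈ L) : L.next x hx = L.next y hy := by subst e; rfl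

lemma List.next_get {α : Type*} [DecidableEq α] (l : List α) (h : l.Nodup) (i : Fin l.length) :
    l.next (l.get i) (List.get_mem _ _) =
      l.get ⟨((i : ℕ) + 1) % l.length, Nat.mod_lt _ (i.1.zero_le.trans_lt i.2)⟩ :=
  List.next_getElem l h i i.isLt

def CycP (E : Set G) (A : Set G) (L : List G) [DecidableEq G] : Prop :=
  L.Nodup ∧ (L.toFinset : Set G) = A ∧ L ≠ [] ∧ List.Chain' (Rel E) L ∧
    ∀ a ∈ L.getLast?, ∀ b ∈ L.head?, Rel E a b

lemma cyc_step [DecidableEq G] {E : Set G} {L : List G} (hnd : L.Nodup)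
    (hch : List.Chain' (Rel E) L)
    (hwrap : ∀ a ∈ L.getLast?, ∀ b ∈ L.head?, Rel E a b) (x : G) (hx : x ∈ L) :
    Rel E x (L.next x hx) := by
  obtain ⟨i, hi⟩ := List.get_of_mem hx
  subst hi
  rw [List.next_get L hnd i]
  rcases Nat.lt_or_ge ((i : ℕ) + 1) L.length with hlt | hge
  · have h1 : ((i : ℕ) + 1) % L.length = (i : ℕ) + 1 := Nat.mod_eq_of_lt hlt
    have := List.isChain_iff_getElem.1 hch i (by omega)
    simp only [List.get_eq_getElem, h1]
    exact this
  · have hlen : (i : ℕ) + 1 = L.length := by omega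
    have h0 : ((i : ℕ) + 1) % L.length = 0 := by rw [hlen, Nat.mod_self]
    apply hwrap
    · rw [List.getLast?_eq_getElem?]
      have hli : L.length - 1 = (i : ℕ) := by omega
      rw [hli, List.getElem?_eq_getElem i.isLt]
      exact Option.mem_some_iff.2 (by simp)
    · rw [head?_get' L (by omega)]
      exact Option.mem_some_iff.2 (congrArg L.get (Fin.ext h0.symm))

include hp1 hpE hpν hEfin hE1 hEsym in
lemma exists_perm_no_short_cycles [Infinite G] [DecidableEq G] (n : ℕ) :
    ∃ σ : Equiv.Perm G, (∀ g : G, σ g * g⁻¹ ∈ E * E * E) ∧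
      ∀ (k : ℕ) (g : G), 0 < k → k ≤ n → (⇑σ)^[k] g ≠ g := by
  classical
  have hex : ∀ g : G, ∃ m : ℕ, Heavy p (p^[m] g) := fun g => exists_heavy_anc p ν hpν g
  set m := n + 2 with hmdef
  have hm0 : 0 < m := by omega
  -- existence of cyclic lists on pieces
  have excyc : ∀ g : G, ∃ L : List G, CycP E (piece p ν hpν hex m g) L := by
    intro g
    set r := blockRoot p ν hpν m (hanc p hex g) with hrdef
    have hrh : Heavy p r := br_heavy p ν hpν m (hanc_heavy p hex g)
    set V := (piece_finite p ν hp1 hpE hpν hEfin hex m g).toFinset with hVdef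
    have hmemV : ∀ x, x ∈ V ↔ x ∈ piece p ν hpν hex m g := by
      intro x; exact Set.Finite.mem_toFinset _
    have hrV : r ∈ V := (hmemV r).2 (by
      have := spine_mem p ν hp1 hpE hpν hEfin hex m hm0 g (i := 0) (by omega)
      simpa using this)
    have hvpiece : hc p r ∈ piece p ν hpν hex m g := by
      have := spine_mem p ν hp1 hpE hpν hEfin hex m hm0 g (i := 1) (by omega)
      simpa using this
    have hvV : hc p r ∈ V := (hmemV _).2 hvpiece
    have hvne : hc p r ≠ r := by
      have := hc_iter_injOn p ν hp1 hpE hpν hEfin hrh (i := 0) (j := 1) (by omega)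
      simpa using fun h => this h.symm
    have hclV : ∀ x ∈ V, x ≠ r → p x ∈ V ∧ x ≠ 1 := by
      intro x hxV hxr
      obtain ⟨h1, h2⟩ := piece_closed p ν hp1 hpE hpν hEfin hex m hm0 ((hmemV x).1 hxV) hxr
      exact ⟨(hmemV _).2 h1, h2⟩
    obtain ⟨L, hnd, hfs, hh, hl, hch⟩ := sek p ν hp1 hpE hpν hEfin hE1 hEsym V.card V r
      (hc p r) le_rfl hrV hvV hclV (Or.inl hvne)
    refine ⟨L, hnd, ?_, ?_, hch, ?_⟩
    · rw [hfs, hVdef]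
      exact Set.Finite.coe_toFinset _
    · intro h; rw [h] at hh; cases hh
    · intro a ha b hb
      rw [hl] at ha
      rw [hh] at hb
      cases ha; cases hb
      show r * (hc p r)⁻¹ ∈ E * E * E
      have hv1 : hc p r ≠ 1 := hc_ne_one p hp1 hpE hEfin hrh
      have he : hc p r * r⁻¹ ∈ E := by
        have := hpE (hc p r) hv1
        rwa [(hc_spec p hp1 hpE hEfin hrh).1] at this
      have he' : r * (hc p r)⁻¹ ∈ E := by
        have := hEsym _ he
        rwa [mul_inv_rev, inv_inv] at this
      have : r * (hc p r)⁻¹ = 1 * 1 * (r * (hc p r)⁻¹) := by group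
      rw [this]
      exact Set.mul_mem_mul (Set.mul_mem_mul hE1 hE1) he'
  -- global choice of lists
  set F : Set G → List G := fun A => if h : ∃ L : List G, CycP E A L then h.choose else []
    with hFdef
  have hF : ∀ g : G, CycP E (piece p ν hpν hex m g) (F (piece p ν hpν hex m g)) := by
    intro g
    simp only [hFdef, dif_pos (excyc g)]
    exact (excyc g).choose_spec
  have hmemL : ∀ g : G, g ∈ F (piece p ν hpν hex m g) := by
    intro g
    have := (hF g).2.1
    rw [← List.mem_toFinset, ← Finset.mem_coe, this]
    exact mem_piece_self p ν hp1 hpE hpν hEfin hex m hm0 g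
  set s : G → G := fun g =>
    if h : g ∈ F (piece p ν hpν hex m g) then (F (piece p ν hpν hex m g)).next g h else g
    with hsdef
  have hs : ∀ g : G, s g = (F (piece p ν hpν hex m g)).next g (hmemL g) := by
    intro g
    simp only [hsdef, dif_pos (hmemL g)]
  have hsp : ∀ g : G, s g ∈ piece p ν hpν hex m g := by
    intro g
    have h1 : s g ∈ F (piece p ν hpν hex m g) := by rw [hs]; exact List.next_mem _ _ _
    rw [← List.mem_toFinset, ← Finset.mem_coe, (hF g).2.1] at h1
    exact h1
  have hpe : ∀ g : G, piece p ν hpν hex m (s g) = piece p ν hpν hex m g := fun g =>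
    piece_eq p ν hp1 hpE hpν hEfin hex m hm0 (hsp g)
  -- transport: the next-step formula for any element of the same piece
  have hs_at : ∀ (g x : G), x ∈ piece p ν hpν hex m g →
      ∀ (L : List G), L = F (piece p ν hpν hex m g) → ∀ hx' : x ∈ L,
      s x = L.next x hx' := by
    intro g x hx L hL hx'
    subst hL
    have hpx : piece p ν hpν hex m x = piece p ν hpν hex m g :=
      piece_eq p ν hp1 hpE hpν hEfin hex m hm0 hx
    rw [hs x]
    exact next_congr' (by rw [hpx]) x (hmemL x) hx'
  -- inverse function
  set t : G → G := fun g =>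
    if h : g ∈ F (piece p ν hpν hex m g) then (F (piece p ν hpν hex m g)).prev g h else g
    with htdef
  have ht : ∀ g : G, t g = (F (piece p ν hpν hex m g)).prev g (hmemL g) := by
    intro g
    simp only [htdef, dif_pos (hmemL g)]
  have htp : ∀ g : G, t g ∈ piece p ν hpν hex m g := by
    intro g
    have h1 : t g ∈ F (piece p ν hpν hex m g) := by rw [ht]; exact List.prev_mem _ _ _
    rw [← List.mem_toFinset, ← Finset.mem_coe, (hF g).2.1] at h1
    exact h1
  have ht_at : ∀ (g x : G), x ∈ piece p ν hpν hex m g →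
      ∀ (L : List G), L = F (piece p ν hpν hex m g) → ∀ hx' : x ∈ L,
      t x = L.prev x hx' := by
    intro g x hx L hL hx'
    subst hL
    have hpx : piece p ν hpν hex m x = piece p ν hpν hex m g :=
      piece_eq p ν hp1 hpE hpν hEfin hex m hm0 hx
    rw [ht x]
    exact prev_congr' (by rw [hpx]) x (hmemL x) hx'
  have hsmem : ∀ g : G, s g ∈ F (piece p ν hpν hex m g) := by
    intro g
    rw [hs g]; exact List.next_mem _ _ _
  have htmem : ∀ g : G, t g ∈ F (piece p ν hpν hex m g) := by
    intro g
    rw [ht g]; exact List.prev_mem _ _ _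
  have hts : ∀ g : G, t (s g) = g := by
    intro g
    have h1 := ht_at g (s g) (hsp g) (F (piece p ν hpν hex m g)) rfl (hsmem g)
    rw [h1]
    have h2 := prev_congr_elem (F (piece p ν hpν hex m g)) (hs g) (hsmem g)
      (List.next_mem _ g (hmemL g))
    rw [h2]
    exact List.prev_next _ (hF g).1 g (hmemL g)
  have hst : ∀ g : G, s (t g) = g := by
    intro g
    have h1 := hs_at g (t g) (htp g) (F (piece p ν hpν hex m g)) rfl (htmem g)
    rw [h1]
    have h2 := next_congr_elem (F (piece p ν hpν hex m g)) (ht g) (htmem g)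
      (List.prev_mem _ g (hmemL g))
    rw [h2]
    exact List.next_prev _ (hF g).1 g (hmemL g)
  have hbij : Function.Bijective s :=
    Function.bijective_iff_has_inverse.2 ⟨t, hts, hst⟩
  refine ⟨Equiv.ofBijective s hbij, ?_, ?_⟩
  · intro g
    show s g * g⁻¹ ∈ E * E * E
    rw [hs]
    exact cyc_step (hF g).1 (hF g).2.2.2.1 (hF g).2.2.2.2 g (hmemL g)
  · intro k g hk hkn
    show ¬ s^[k] g = g
    set L := F (piece p ν hpν hex m g) with hLdef
    have hnd : L.Nodup := (hF g).1
    -- length lower bound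
    have hlen : m ≤ L.length := by
      have hcard : L.toFinset.card = L.length := List.toFinset_card_of_nodup hnd
      have himg : (Finset.range m).image
          (fun i => (hc p)^[i] (blockRoot p ν hpν m (hanc p hex g))) ⊆ L.toFinset := by
        intro x hx
        obtain ⟨i, hi, rfl⟩ := Finset.mem_image.1 hx
        rw [← Finset.mem_coe, (hF g).2.1]
        exact spine_mem p ν hp1 hpE hpν hEfin hex m hm0 g (Finset.mem_range.1 hi)
      have hinj : Set.InjOn (fun i => (hc p)^[i] (blockRoot p ν hpν m (hanc p hex g)))
          (Finset.range m) := by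
        intro i hi j hj hij
        by_contra hne
        rcases Nat.lt_or_ge i j with h | h
        · exact hc_iter_injOn p ν hp1 hpE hpν hEfin
            (br_heavy p ν hpν m (hanc_heavy p hex g)) h hij
        · exact hc_iter_injOn p ν hp1 hpE hpν hEfin
            (br_heavy p ν hpν m (hanc_heavy p hex g)) (by omega) hij.symm
      have := Finset.card_image_of_injOn hinj
      have hle := Finset.card_le_card himg
      rw [this, Finset.card_range] at hle
      omega
    -- iterate formula
    have hiter : ∀ (k : ℕ) (i : Fin L.length),
        s^[k] (L.get i) = L.get ⟨((i : ℕ) + k) % L.length, Nat.mod_lt _ (by omega)⟩ := by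
      intro k
      induction k with
      | zero =>
        intro i
        simp only [iterate_zero, id_eq]
        congr 1
        apply Fin.ext
        show (i : ℕ) = ((i : ℕ) + 0) % L.length
        rw [Nat.add_zero, Nat.mod_eq_of_lt i.isLt]
      | succ k ihk =>
        intro i
        rw [iterate_succ_apply', ihk i]
        set j : Fin L.length := ⟨((i : ℕ) + k) % L.length, Nat.mod_lt _ (by omega)⟩ with hjdef
        have hmem : L.get j ∈ piece p ν hpν hex m g := by
          have h3 : L.get j ∈ L := List.get_mem L j
          rw [← List.mem_toFinset, ← Finset.mem_coe, (hF g).2.1] at h3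
          exact h3
        rw [hs_at g (L.get j) hmem L hLdef (List.get_mem L j), List.next_get L hnd j]
        congr 1
        apply Fin.ext
        show ((j : ℕ) + 1) % L.length = ((i : ℕ) + (k + 1)) % L.length
        rw [hjdef]
        show (((i : ℕ) + k) % L.length + 1) % L.length = ((i : ℕ) + (k + 1)) % L.length
        rw [Nat.mod_add_mod]
        have harr : (i:ℕ) + k + 1 = (i:ℕ) + (k+1) := by omega
        rw [harr]
    intro hcyc
    obtain ⟨i, hig⟩ := List.get_of_mem (hmemL g)
    rw [← hig, hiter k i] at hcyc
    have hidx' : ((i : ℕ) + k) % L.length = (i : ℕ) := by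
      have h2 := (List.Nodup.get_inj_iff hnd).1 hcyc
      exact congrArg Fin.val h2
    have hq := Nat.div_add_mod ((i : ℕ) + k) L.length
    set q := ((i : ℕ) + k) / L.length with hqdef
    rcases Nat.eq_zero_or_pos q with hq0 | hq0
    · rw [hq0] at hq
      omega
    · have : L.length ≤ L.length * q := Nat.le_mul_of_pos_right _ hq0
      omega

end Assemble

end Core

section Limit
variable {G : Type*} [Group G]

lemma exists_perm_no_cycles {B : Set G} (hB : B.Finite)
    (h : ∀ n : ℕ, ∃ σ : Equiv.Perm G, (∀ g : G, σ g * g⁻¹ ∈ B) ∧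
      ∀ (k : ℕ) (g : G), 0 < k → k ≤ n → (⇑σ)^[k] g ≠ g) :
    ∃ σ : Equiv.Perm G, (∀ g : G, σ g * g⁻¹ ∈ B) ∧
      ∀ (k : ℕ) (g : G), 0 < k → (⇑σ)^[k] g ≠ g := by
  classical
  set σn : ℕ → Equiv.Perm G := fun n => (h n).choose with hσn
  have hd : ∀ n g, σn n g * g⁻¹ ∈ B := fun n => (h n).choose_spec.1
  have hc : ∀ n k g, 0 < k → k ≤ n → (⇑(σn n))^[k] g ≠ g := fun n => (h n).choose_spec.2
  set U : Ultrafilter ℕ := Ultrafilter.of Filter.atTop with hU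
  have hUle : (U : Filter ℕ) ≤ Filter.atTop := Ultrafilter.of_le _
  -- value of σn n g lies in the finite set (·*g) '' B
  have hval : ∀ g n, σn n g ∈ (fun b => b * g) '' B := by
    intro g n
    exact ⟨σn n g * g⁻¹, hd n g, by group⟩
  have hlim : ∀ g : G, ∃ a : G, {n : ℕ | σn n g = a} ∈ U := by
    intro g
    have huniv : (⋃ a ∈ (fun b => b * g) '' B, {n : ℕ | σn n g = a}) ∈ U := by
      have : (⋃ a ∈ (fun b => b * g) '' B, {n : ℕ | σn n g = a}) = Set.univ := by
        apply Set.eq_univ_of_forall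
        intro n
        exact Set.mem_biUnion (hval g n) rfl
      rw [this]
      exact Filter.univ_mem
    obtain ⟨a, _, ha⟩ := (Ultrafilter.finite_biUnion_mem_iff (hB.image _)).1 huniv
    exact ⟨a, ha⟩
  set σ : G → G := fun g => (hlim g).choose with hσ
  have hσU : ∀ g : G, {n : ℕ | σn n g = σ g} ∈ U := fun g => (hlim g).choose_spec
  have hagree : ∀ (F : Set G), F.Finite → ∀ N : ℕ,
      ∃ n : ℕ, N ≤ n ∧ ∀ g ∈ F, σn n g = σ g := by
    intro F hF N
    have h1 : (⋂ g ∈ F, {n : ℕ | σn n g = σ g}) ∈ U := (Filter.biInter_mem hF).2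
      (fun g _ => hσU g)
    have h2 : {n : ℕ | N ≤ n} ∈ U := hUle (Filter.mem_atTop N)
    obtain ⟨n, hn⟩ := Ultrafilter.nonempty_of_mem (Filter.inter_mem h2 h1)
    refine ⟨n, hn.1, fun g hg => ?_⟩
    have := hn.2
    rw [Set.mem_iInter₂] at this
    exact this g hg
  have hdisp : ∀ g : G, σ g * g⁻¹ ∈ B := by
    intro g
    obtain ⟨n, hn⟩ := Ultrafilter.nonempty_of_mem (hσU g)
    rw [← hn]
    exact hd n g
  have hinj : Function.Injective σ := by
    intro a b hab
    by_contra hne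
    obtain ⟨n, _, hn⟩ := hagree {a, b} ((Set.finite_singleton b).insert a) 0
    have h1 : σn n a = σn n b := by
      rw [hn a (by simp), hn b (by simp), hab]
    exact hne ((σn n).injective h1)
  have hsurj : Function.Surjective σ := by
    intro y
    obtain ⟨n, _, hn⟩ := hagree ((fun b => b⁻¹ * y) '' B) (hB.image _) 0
    set x := (σn n).symm y with hx
    have hxy : σn n x = y := Equiv.apply_symm_apply _ _
    have hxF : x ∈ (fun b => b⁻¹ * y) '' B := by
      refine ⟨σn n x * x⁻¹, hd n x, ?_⟩
      rw [hxy]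
      group
    refine ⟨x, ?_⟩
    rw [← hn x hxF, hxy]
  refine ⟨Equiv.ofBijective σ ⟨hinj, hsurj⟩, hdisp, ?_⟩
  intro k g hk
  show ¬ σ^[k] g = g
  intro hcyc
  have hFfin : (Set.range fun j : Fin (k+1) => σ^[(j : ℕ)] g).Finite :=
    Set.finite_range _
  obtain ⟨n, hnk, hn⟩ := hagree _ hFfin k
  have hiter : ∀ j : ℕ, j ≤ k → (⇑(σn n))^[j] g = σ^[j] g := by
    intro j
    induction j with
    | zero => intro _; rfl
    | succ j ihj =>
      intro hj
      rw [iterate_succ_apply', iterate_succ_apply', ihj (by omega)]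
      exact hn (σ^[j] g) ⟨⟨j, by omega⟩, rfl⟩
  exact hc n k g hk hnk (by rw [hiter k le_rfl]; exact hcyc)

end Limit

theorem exists_good_perm {G : Type*} [Group G] (hfg : Group.FG G) [Infinite G] :
    ∃ σ : Equiv.Perm G, (disp ⇑σ).Finite ∧ ∀ (k : ℕ) (g : G), 0 < k → (⇑σ)^[k] g ≠ g := by
  classical
  obtain ⟨S, hSclos, hSfin⟩ := (Subgroup.fg_iff ⊤).1 hfg.out
  set E : Set G := {1} ∪ S ∪ S⁻¹ with hE
  have hEfin : E.Finite := ((Set.finite_singleton 1).union hSfin).union hSfin.inv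
  have hE1 : (1 : G) ∈ E := Or.inl (Or.inl rfl)
  have hEsym : ∀ a ∈ E, a⁻¹ ∈ E := by
    rintro a (⟨h1 | hS⟩ | hSi)
    · exact Or.inl (Or.inl (by simp_all))
    · exact Or.inr (Set.inv_mem_inv.2 hS)
    · exact Or.inl (Or.inr (by simpa using hSi))
  have hEinv : E⁻¹ = E := by
    ext a
    constructor
    · intro ha
      have := hEsym a⁻¹ (Set.mem_inv.1 ha)
      rwa [inv_inv] at this
    · intro ha
      exact Set.mem_inv.2 (hEsym a ha)
  have hgen : ∀ g : G, ∃ k : ℕ, g ∈ E ^ k := by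
    intro g
    have hg : g ∈ Subgroup.closure S := by rw [hSclos]; trivial
    induction hg using Subgroup.closure_induction with
    | mem x hx => exact ⟨1, by rw [pow_one]; exact Or.inl (Or.inr hx)⟩
    | one => exact ⟨0, by rw [pow_zero]; exact Set.mem_one.2 rfl⟩
    | mul x y hx hy ihx ihy =>
      obtain ⟨k, hk⟩ := ihx
      obtain ⟨l, hl⟩ := ihy
      exact ⟨k + l, by rw [pow_add]; exact Set.mul_mem_mul hk hl⟩
    | inv x hx ihx =>
      obtain ⟨k, hk⟩ := ihx
      refine ⟨k, ?_⟩
      have : x⁻¹ ∈ (E ^ k)⁻¹ := Set.inv_mem_inv.2 hk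
      rwa [← inv_pow, hEinv] at this
  set ν : G → ℕ := fun g => Nat.find (hgen g) with hν
  have hν0 : ∀ g : G, g ≠ 1 → ν g ≠ 0 := by
    intro g hg h0
    have h1 : g ∈ E ^ ν g := Nat.find_spec (hgen g)
    rw [h0, pow_zero] at h1
    exact hg (Set.mem_one.1 h1)
  have hpex : ∀ g : G, ∃ h : G, (g = 1 → h = 1) ∧
      (g ≠ 1 → (g * h⁻¹ ∈ E ∧ ν h < ν g)) := by
    intro g
    by_cases hg : g = 1
    · exact ⟨1, fun _ => rfl, fun h => absurd hg h⟩
    · have hk : ν g ≠ 0 := hν0 g hg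
      have hspec : g ∈ E ^ (ν g) := Nat.find_spec (hgen g)
      obtain ⟨k, hkeq⟩ : ∃ k, ν g = k + 1 := ⟨ν g - 1, by omega⟩
      rw [hkeq, pow_succ'] at hspec
      obtain ⟨a, ha, b, hb, hab⟩ := hspec
      refine ⟨b, fun h => absurd h hg, fun _ => ⟨?_, ?_⟩⟩
      · rw [← hab]
        simpa using ha
      · have : ν b ≤ k := Nat.find_le hb
        omega
  set p : G → G := fun g => (hpex g).choose with hp
  have hp1 : p 1 = 1 := (hpex 1).choose_spec.1 rfl
  have hpE : ∀ g : G, g ≠ 1 → g * (p g)⁻¹ ∈ E := fun g hg =>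
    ((hpex g).choose_spec.2 hg).1
  have hpν : ∀ g : G, g ≠ 1 → ν (p g) < ν g := fun g hg =>
    ((hpex g).choose_spec.2 hg).2
  have hBfin : (E * E * E).Finite := (hEfin.mul hEfin).mul hEfin
  obtain ⟨σ, hσd, hσc⟩ := exists_perm_no_cycles hBfin
    (fun n => exists_perm_no_short_cycles p ν hp1 hpE hpν hEfin hE1 hEsym n)
  refine ⟨σ, hBfin.subset ?_, hσc⟩
  rintro _ ⟨g, rfl⟩
  exact hσd g


section DispLemmas
variable {G : Type*} [Group G]

lemma disp_comp (σ τ : G → G) : disp (fun g => σ (τ g)) ⊆ disp σ * disp τ := by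
  rintro _ ⟨g, rfl⟩
  exact ⟨σ (τ g) * (τ g)⁻¹, ⟨τ g, rfl⟩, τ g * g⁻¹, ⟨g, rfl⟩, by group⟩

lemma disp_inv (σ : Equiv.Perm G) : disp ⇑σ⁻¹ ⊆ (disp ⇑σ)⁻¹ := by
  rintro _ ⟨g, rfl⟩
  rw [Set.mem_inv]
  refine ⟨σ⁻¹ g, ?_⟩
  simp [mul_inv_rev]

lemma disp_zpow_finite (σ : Equiv.Perm G) (h : (disp ⇑σ).Finite) (z : ℤ) :
    (disp ⇑(σ ^ z)).Finite := by
  have hinv : (disp ⇑σ⁻¹).Finite := (h.inv).subset (disp_inv σ)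
  induction z using Int.induction_on with
  | zero => exact (Set.finite_singleton 1).subset (by rintro _ ⟨g, rfl⟩; simp)
  | succ k ih =>
      have : (σ ^ ((k : ℤ) + 1)) = (σ ^ (k : ℤ)) * σ := by rw [zpow_add, zpow_one]
      rw [this]
      exact ((ih.mul h).subset (disp_comp _ _)).subset (by intro x hx; exact hx)
  | pred k ih =>
      have : (σ ^ (-(k : ℤ) - 1)) = (σ ^ (-(k : ℤ))) * σ⁻¹ := by
        rw [zpow_sub, zpow_one]
      rw [this]
      exact ((ih.mul hinv).subset (disp_comp _ _)).subset (by intro x hx; exact hx)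

lemma zpow_eq_zero_of_free (σ : Equiv.Perm G) (hf : ∀ (k : ℕ) (g : G), 0 < k → σ^[k] g ≠ g)
    {z : ℤ} {g : G} (h : (σ ^ z) g = g) : z = 0 := by
  rcases lt_trichotomy z 0 with hz | hz | hz
  · have h' : (σ ^ (-z)) g = g := by
      have := congrArg (⇑(σ ^ (-z))) h
      rw [← Equiv.Perm.mul_apply, ← zpow_add, neg_add_cancel, zpow_zero, Equiv.Perm.one_apply] at this
      exact this.symm
    set m := (-z).toNat with hm
    have hmz : ((m : ℤ)) = -z := Int.toNat_of_nonneg (by omega)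
    have : (⇑σ)^[m] g = g := by
      rw [Equiv.Perm.iterate_eq_pow, ← zpow_natCast, hmz]; exact h'
    exact absurd this (hf m g (by omega))
  · exact hz
  · set m := z.toNat with hm
    have hmz : ((m : ℤ)) = z := Int.toNat_of_nonneg (by omega)
    have : (⇑σ)^[m] g = g := by
      rw [Equiv.Perm.iterate_eq_pow, ← zpow_natCast, hmz]; exact h
    exact absurd this (hf m g (by omega))


end DispLemmas

end SewardAux
end
end SewardProof

/-- The product of two infinite finitely generated groups admits a translation-like action
of `ℤ²`. -/
theorem product_has_translationLike_Z2 {G₁ G₂ : Type*} [Group G₁] [Group G₂]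
    [Infinite G₁] [Infinite G₂] (h1 : Group.FG G₁) (h2 : Group.FG G₂) :
    HasTranslationLikeAction (Multiplicative (ℤ × ℤ)) (G₁ × G₂) := by
  obtain ⟨σ₁, hd₁, hf₁⟩ := SewardAux.exists_good_perm h1
  obtain ⟨σ₂, hd₂, hf₂⟩ := SewardAux.exists_good_perm h2
  refine ⟨fun z gg => ((σ₁ ^ (Multiplicative.toAdd z).1) gg.1, (σ₂ ^ (Multiplicative.toAdd z).2) gg.2),
      ?_, ?_, ?_, ?_⟩
  · intro g; simp
  · intro a b g
    simp only [toAdd_mul, Prod.fst_add, Prod.snd_add, zpow_add, Equiv.Perm.mul_apply]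
  · intro h g hfix
    have h1' := congrArg Prod.fst hfix
    have h2' := congrArg Prod.snd hfix
    have e1 : (Multiplicative.toAdd h).1 = 0 := SewardAux.zpow_eq_zero_of_free σ₁ hf₁ h1'
    have e2 : (Multiplicative.toAdd h).2 = 0 := SewardAux.zpow_eq_zero_of_free σ₂ hf₂ h2'
    have : Multiplicative.toAdd h = 0 := Prod.ext e1 e2
    simpa using congrArg Multiplicative.ofAdd this
  · intro h
    have F1 := SewardAux.disp_zpow_finite σ₁ hd₁ (Multiplicative.toAdd h).1
    have F2 := SewardAux.disp_zpow_finite σ₂ hd₂ (Multiplicative.toAdd h).2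
    refine (F1.prod F2).subset ?_
    rintro _ ⟨⟨g₁, g₂⟩, rfl⟩
    exact ⟨⟨g₁, rfl⟩, ⟨g₂, rfl⟩⟩
end
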